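/- arXiv:0805.4227 — 8 statements merged into one kernel-verified Lean document; each statement's English description precedes it below -/
import Mathlib

section
/- Let n ≥ 1 and N ≥ 1 be integers, let ϖ ∈ R with 0 < v(ϖ) < ∞, and set b = N·v(ϖ)/(p−1). Assume moreover that v(x) = ∞ only for x = 0. Let M be a finitely generated W_n(R)-module and φ_M : M → M an additive map which is semilinear over the Frobenius φ of W_n(R) (i.e. φ_M(a·x) = φ(a)·φ_M(x) for a ∈ W_n(R), x ∈ M) and such that [ϖ]^N·M is contained in the W_n(R)-submodule generated by φ_M(M). Then every W_n(R)-linear map f : M → W_n(R) satisfying f ∘ φ_M = φ ∘ f and f(M) ⊆ [𝔞_R^{>b}] is identically zero. (This is the injectivity part of Proposition 2.1 of the paper, in the abstract form in which it is used: taking M = W_n(R) ⊗_{𝔖_n} 𝔐 for a torsion Kisin module 𝔐 killed by p^n of height ≤ r, with u^N = 0 in W_n[u]/E(u)^r, it yields that the reduction map T_{𝔖_n}(𝔐) → J_{n,b}(𝔐) is injective.) -/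
/-!
Statement 0 (injectivity part of Proposition 2.7 of Caruso–Liu, abstract form).
`R` is a perfect ring of characteristic `p` with an additive valuation `v` (with
`v x = ∞` only for `x = 0`), `ϖ ∈ R` has valuation `0 < v ϖ < ∞`, and
`b = N·v(ϖ)/(p−1)`.  If `M` is a finitely generated `W_n(R)`-module with a
Frobenius-semilinear endomorphism `φ_M` such that `[ϖ]^N · M` is contained in the
`W_n(R)`-span of `φ_M(M)`, then any `W_n(R)`-linear map `f : M → W_n(R)` commuting
with Frobenius and taking values in `[𝔞_R^{>b}]` vanishes.
-/

set_option linter.unusedSectionVars false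

open Function

namespace WittVector

variable {p : ℕ} [hp : Fact p.Prime]

local notation "𝕎" => WittVector p

private theorem teich_mul_aux1 {σ : Type*} (t : MvPolynomial σ ℚ) (z : 𝕎 (MvPolynomial σ ℚ)) :
    teichmuller p t * z = WittVector.mk p (fun k => t ^ p ^ k * z.coeff k) := by
  apply (ghostMap.bijective_of_invertible p (MvPolynomial σ ℚ)).1
  funext k
  rw [map_mul]
  show ghostMap _ k * ghostMap z k = ghostMap _ k
  rw [ghostMap_apply, ghostMap_apply, ghostMap_apply, ghostComponent_teichmuller,
    ghostComponent_apply, ghostComponent_apply, aeval_wittPolynomial, aeval_wittPolynomial]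
  simp only [coeff_mk]
  rw [Finset.mul_sum]
  refine Finset.sum_congr rfl fun i hi => ?_
  rw [Finset.mem_range] at hi
  rw [mul_pow, ← pow_mul]
  have : p ^ i * p ^ (k - i) = p ^ k := by
    rw [← pow_add]
    congr 1
    omega
  rw [this]
  ring

private theorem teich_mul_aux2 {σ : Type*} (t : MvPolynomial σ ℤ) (z : 𝕎 (MvPolynomial σ ℤ)) :
    teichmuller p t * z = WittVector.mk p (fun k => t ^ p ^ k * z.coeff k) := by
  refine map_injective (MvPolynomial.map (Int.castRingHom ℚ))
    (MvPolynomial.map_injective _ Int.cast_injective) ?_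
  rw [map_mul, map_teichmuller, teich_mul_aux1]
  ext k
  simp only [map_coeff, coeff_mk, map_mul, map_pow]

theorem teichmuller_mul_coeff {R : Type*} [CommRing R] (t : R) (z : 𝕎 R) (k : ℕ) :
    (teichmuller p t * z).coeff k = t ^ p ^ k * z.coeff k := by
  rcases MvPolynomial.counit_surjective R t with ⟨t', rfl⟩
  rcases map_surjective (MvPolynomial.counit R) (MvPolynomial.counit_surjective R) z with ⟨z', rfl⟩
  rw [← map_teichmuller, ← map_mul, teich_mul_aux2]
  simp only [map_coeff, coeff_mk, map_mul, map_pow]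

end WittVector

open Function

namespace CLWitt

variable {p : ℕ} [hp : Fact p.Prime] {n : ℕ} {R S : Type*} [CommRing R] [CommRing S]

local notation "𝕎" => WittVector p

theorem truncate_eq_iff (a b : 𝕎 R) :
    WittVector.truncate n a = WittVector.truncate n b ↔ ∀ i : Fin n, a.coeff i = b.coeff i := by
  constructor
  · intro h i
    have := congrArg (fun z => TruncatedWittVector.coeff i z) h
    simpa [WittVector.coeff_truncate] using this
  · intro h
    ext i
    simp [WittVector.coeff_truncate, h i]

theorem truncate_out (x : TruncatedWittVector p n R) : WittVector.truncate n x.out = x :=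
  TruncatedWittVector.truncateFun_out x

theorem truncate_map_congr (f : R →+* S) {a b : 𝕎 R}
    (h : WittVector.truncate n a = WittVector.truncate n b) :
    WittVector.truncate n (WittVector.map f a) = WittVector.truncate n (WittVector.map f b) := by
  rw [truncate_eq_iff] at h ⊢
  intro i
  rw [WittVector.map_coeff, WittVector.map_coeff, h i]

/-- coefficientwise map on truncated Witt vectors, as a ring hom -/
noncomputable def truncMap (f : R →+* S) :
    TruncatedWittVector p n R →+* TruncatedWittVector p n S where
  toFun x := WittVector.truncate n (WittVector.map f x.out)
  map_zero' := by
    show WittVector.truncate n (WittVector.map f (0 : TruncatedWittVector p n R).out) = 0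
    rw [truncate_map_congr f (a := (0 : TruncatedWittVector p n R).out) (b := 0)]
    · simp
    · rw [truncate_out, map_zero]
  map_one' := by
    show WittVector.truncate n (WittVector.map f (1 : TruncatedWittVector p n R).out) = 1
    rw [truncate_map_congr f (a := (1 : TruncatedWittVector p n R).out) (b := 1)]
    · simp
    · rw [truncate_out, map_one]
  map_add' x y := by
    show WittVector.truncate n (WittVector.map f (x + y).out)
      = WittVector.truncate n (WittVector.map f x.out) + WittVector.truncate n (WittVector.map f y.out)
    rw [truncate_map_congr f (a := (x + y).out) (b := x.out + y.out)]
    · rw [map_add, map_add]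
    · rw [truncate_out, map_add, truncate_out, truncate_out]
  map_mul' x y := by
    show WittVector.truncate n (WittVector.map f (x * y).out)
      = WittVector.truncate n (WittVector.map f x.out) * WittVector.truncate n (WittVector.map f y.out)
    rw [truncate_map_congr f (a := (x * y).out) (b := x.out * y.out)]
    · rw [map_mul, map_mul]
    · rw [truncate_out, map_mul, truncate_out, truncate_out]

theorem coeff_truncMap (f : R →+* S) (x : TruncatedWittVector p n R) (i : Fin n) :
    (truncMap f x).coeff i = f (x.coeff i) := by
  show (WittVector.truncate n (WittVector.map f x.out)).coeff i = _
  rw [WittVector.coeff_truncate, WittVector.map_coeff, TruncatedWittVector.coeff_out]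

theorem truncMap_truncate (f : R →+* S) (x : 𝕎 R) :
    truncMap f (WittVector.truncate n x) = WittVector.truncate n (WittVector.map f x) := by
  ext i
  rw [coeff_truncMap, WittVector.coeff_truncate, WittVector.coeff_truncate,
    WittVector.map_coeff]


end CLWitt

/-- The Teichmüller representative of `y` in the truncated Witt vector ring `W_n(R)`. -/
noncomputable def truncTeichmuller (p n : ℕ) [hp : Fact p.Prime] {R : Type*} [CommRing R]
    (y : R) : TruncatedWittVector p n R :=
  WittVector.truncate n (WittVector.teichmuller p y)

/-- The Frobenius of `W_n(R)` for `R` of characteristic `p`, given on components by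
`(x_0, …, x_{n-1}) ↦ (x_0^p, …, x_{n-1}^p)`. -/
def truncFrobenius (p n : ℕ) {R : Type*} [CommRing R] (x : TruncatedWittVector p n R) :
    TruncatedWittVector p n R :=
  TruncatedWittVector.mk p fun i => x.coeff i ^ p

namespace CLWitt

variable {p : ℕ} [hp : Fact p.Prime] {n : ℕ} {R S : Type*} [CommRing R] [CommRing S]

local notation "𝕎" => WittVector p

theorem coeff_truncFrobenius (x : TruncatedWittVector p n R) (i : Fin n) :
    (truncFrobenius p n x).coeff i = x.coeff i ^ p :=
  TruncatedWittVector.coeff_mk _ _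

theorem truncFrobenius_truncate [CharP R p] (x : 𝕎 R) :
    truncFrobenius p n (WittVector.truncate n x) = WittVector.truncate n (WittVector.frobenius x) := by
  ext i
  rw [coeff_truncFrobenius, WittVector.coeff_truncate, WittVector.coeff_truncate,
    WittVector.coeff_frobenius_charP]

theorem truncFrobenius_mul [CharP R p] (x y : TruncatedWittVector p n R) :
    truncFrobenius p n (x * y) = truncFrobenius p n x * truncFrobenius p n y := by
  obtain ⟨a, rfl⟩ := WittVector.truncate_surjective (p := p) (n := n) (R := R) x
  obtain ⟨b, rfl⟩ := WittVector.truncate_surjective (p := p) (n := n) (R := R) y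
  rw [← map_mul, truncFrobenius_truncate, truncFrobenius_truncate, truncFrobenius_truncate,
    ← map_mul, map_mul]

theorem truncTeichmuller_mul (a b : R) :
    truncTeichmuller p n (a * b) = truncTeichmuller p n a * truncTeichmuller p n b := by
  unfold truncTeichmuller
  rw [map_mul (WittVector.teichmuller p), map_mul]

theorem truncTeichmuller_pow (a : R) (m : ℕ) :
    truncTeichmuller p n (a ^ m) = truncTeichmuller p n a ^ m := by
  induction m with
  | zero =>
    simp only [pow_zero]
    unfold truncTeichmuller
    rw [map_one (WittVector.teichmuller p), map_one]
  | succ m ih => rw [pow_succ, pow_succ, truncTeichmuller_mul, ih]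

theorem truncTeichmuller_mul_coeff (t : R) (z : TruncatedWittVector p n R) (i : Fin n) :
    (truncTeichmuller p n t * z).coeff i = t ^ p ^ (i : ℕ) * z.coeff i := by
  obtain ⟨z, rfl⟩ := WittVector.truncate_surjective (p := p) (n := n) (R := R) z
  show ((WittVector.truncate n) (WittVector.teichmuller p t) * _).coeff i = _
  rw [← map_mul, WittVector.coeff_truncate, WittVector.teichmuller_mul_coeff,
    WittVector.coeff_truncate]

theorem truncFrobenius_teichmuller [CharP R p] (y : R) :
    truncFrobenius p n (truncTeichmuller p n y) = truncTeichmuller p n (y ^ p) := by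
  show truncFrobenius p n ((WittVector.truncate n) _) = (WittVector.truncate n) _
  rw [truncFrobenius_truncate]
  congr 1
  ext k
  rcases Nat.eq_zero_or_pos k with hk | hk
  · subst hk
    rw [WittVector.coeff_frobenius_charP, WittVector.teichmuller_coeff_zero,
      WittVector.teichmuller_coeff_zero]
  · rw [WittVector.coeff_frobenius_charP, WittVector.teichmuller_coeff_pos _ _ _ hk,
      WittVector.teichmuller_coeff_pos _ _ _ hk, zero_pow hp.out.ne_zero]

theorem truncMap_truncFrobenius (f : R →+* S) (x : TruncatedWittVector p n R) :
    truncMap f (truncFrobenius p n x) = truncFrobenius p n (truncMap f x) := by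
  ext i
  rw [coeff_truncMap, coeff_truncFrobenius, coeff_truncFrobenius, coeff_truncMap, map_pow]

theorem truncMap_truncTeichmuller (f : R →+* S) (y : R) :
    truncMap f (truncTeichmuller p n y) = truncTeichmuller p n (f y) := by
  show truncMap f ((WittVector.truncate n) _) = _
  rw [truncMap_truncate, WittVector.map_teichmuller]
  rfl

theorem mem_range_truncMap_subtype_iff {K : Type*} [CommRing K] {O : Subring K}
    (z : TruncatedWittVector p n K) :
    z ∈ (truncMap (O.subtype) (p := p) (n := n)).range ↔ ∀ i, z.coeff i ∈ O := by
  constructor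
  · rintro ⟨a, rfl⟩ i
    rw [coeff_truncMap]
    exact (a.coeff i).2
  · intro h
    refine ⟨TruncatedWittVector.mk p (fun i => ⟨z.coeff i, h i⟩), ?_⟩
    ext i
    rw [coeff_truncMap, TruncatedWittVector.coeff_mk]
    rfl

end CLWitt

namespace CLWitt


section Val

variable {R : Type*} [CommRing R] [IsDomain R] (v : R → WithTop ℝ)
variable (hv0 : v 0 = ⊤) (hvmul : ∀ x y : R, v (x * y) = v x + v y)
variable (hvadd : ∀ x y : R, min (v x) (v y) ≤ v (x + y))
variable (hvnonneg : ∀ x : R, 0 ≤ v x) (hvtop : ∀ x : R, v x = ⊤ → x = 0)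

include hvmul hvtop in
theorem hv_one : v 1 = 0 := by
  have h := hvmul 1 1
  rw [mul_one] at h
  cases hv1 : v 1 with
  | top => exact absurd (hvtop 1 hv1) one_ne_zero
  | coe r =>
    rw [hv1, ← WithTop.coe_add, WithTop.coe_inj] at h
    have hr : r = 0 := by linarith
    exact_mod_cast hr

include hvmul hvtop in
theorem hv_neg (x : R) : v (-x) = v x := by
  have hm1 : v (-1 : R) = 0 := by
    have h := hvmul (-1) (-1)
    rw [neg_mul_neg, one_mul, hv_one v hvmul hvtop] at h
    cases hv1 : v (-1 : R) with
    | top => rw [hv1, WithTop.top_add] at h; exact absurd h WithTop.zero_ne_top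
    | coe r =>
      rw [hv1, ← WithTop.coe_add] at h
      have hr : r + r = 0 := by exact_mod_cast h.symm
      have hr0 : r = 0 := by linarith
      exact_mod_cast hr0
  have : (-x : R) = -1 * x := by ring
  rw [this, hvmul, hm1, zero_add]

include hvmul hvtop in
theorem hv_pow_real (x : R) (α : ℝ) (hx : v x = (α : ℝ)) (e : ℕ) :
    v (x ^ e) = ((e * α : ℝ) : WithTop ℝ) := by
  induction e with
  | zero => simp [hv_one v hvmul hvtop]
  | succ e ih =>
    rw [pow_succ, hvmul, ih, hx, ← WithTop.coe_add, WithTop.coe_inj]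
    push_cast
    ring

/-- the subring of elements of the fraction field of "valuation ≥ 0" -/
def valSubring : Subring (FractionRing R) where
  carrier := {z | ∃ x y : R, y ≠ 0 ∧
    z * algebraMap R (FractionRing R) y = algebraMap R (FractionRing R) x ∧ v y ≤ v x}
  one_mem' := ⟨1, 1, one_ne_zero, by rw [map_one, mul_one], le_refl _⟩
  zero_mem' := ⟨0, 1, one_ne_zero, by rw [zero_mul, map_zero], by rw [hv0]; exact le_top⟩
  add_mem' := by
    rintro a b ⟨x₁, y₁, hy₁, e₁, l₁⟩ ⟨x₂, y₂, hy₂, e₂, l₂⟩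
    refine ⟨x₁ * y₂ + x₂ * y₁, y₁ * y₂, mul_ne_zero hy₁ hy₂, ?_, ?_⟩
    · have : (a + b) * algebraMap R (FractionRing R) (y₁ * y₂)
          = (a * algebraMap R (FractionRing R) y₁) * algebraMap R (FractionRing R) y₂
            + (b * algebraMap R (FractionRing R) y₂) * algebraMap R (FractionRing R) y₁ := by
        rw [map_mul]; ring
      rw [this, e₁, e₂, ← map_mul, ← map_mul, ← map_add]
    · refine le_trans ?_ (hvadd _ _)
      rw [hvmul, hvmul, hvmul]
      exact le_min (add_le_add l₁ le_rfl) (by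
        rw [add_comm (v y₁) (v y₂)]
        exact add_le_add l₂ le_rfl)
  mul_mem' := by
    rintro a b ⟨x₁, y₁, hy₁, e₁, l₁⟩ ⟨x₂, y₂, hy₂, e₂, l₂⟩
    refine ⟨x₁ * x₂, y₁ * y₂, mul_ne_zero hy₁ hy₂, ?_, ?_⟩
    · have : (a * b) * algebraMap R (FractionRing R) (y₁ * y₂)
          = (a * algebraMap R (FractionRing R) y₁) * (b * algebraMap R (FractionRing R) y₂) := by
        rw [map_mul]; ring
      rw [this, e₁, e₂, ← map_mul]
    · rw [hvmul, hvmul]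
      exact add_le_add l₁ l₂
  neg_mem' := by
    rintro a ⟨x, y, hy, e, l⟩
    exact ⟨-x, y, hy, by rw [neg_mul, e, ← map_neg], by rw [hv_neg v hvmul hvtop]; exact l⟩

include hvmul hvtop hvnonneg in
theorem algebraMap_mem_valSubring (x : R) :
    algebraMap R (FractionRing R) x ∈ valSubring v hv0 hvmul hvadd hvtop := by
  refine ⟨x, 1, one_ne_zero, by rw [map_one, mul_one], ?_⟩
  rw [hv_one v hvmul hvtop]
  exact hvnonneg x

end Val

/-- an auxiliary ideal: preimage under `ρ` of `t * W` -/
def auxIdeal {p n : ℕ} [Fact p.Prime] {R K : Type*} [CommRing R] [CommRing K]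
    (ρ : TruncatedWittVector p n R →+* TruncatedWittVector p n K)
    (W : Subring (TruncatedWittVector p n K)) (hρ : ∀ z, ρ z ∈ W)
    (t : TruncatedWittVector p n K) : Ideal (TruncatedWittVector p n R) where
  carrier := {z | ∃ a ∈ W, ρ z = t * a}
  zero_mem' := ⟨0, W.zero_mem, by rw [map_zero, mul_zero]⟩
  add_mem' := by
    rintro x y ⟨a, ha, ea⟩ ⟨c, hc, ec⟩
    exact ⟨a + c, W.add_mem ha hc, by rw [map_add, ea, ec, mul_add]⟩
  smul_mem' := by
    rintro r x ⟨a, ha, ea⟩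
    refine ⟨ρ r * a, W.mul_mem (hρ r) ha, ?_⟩
    rw [smul_eq_mul, map_mul, ea]
    ring

theorem mem_auxIdeal_iff {p n : ℕ} [Fact p.Prime] {R K : Type*} [CommRing R] [CommRing K]
    (ρ : TruncatedWittVector p n R →+* TruncatedWittVector p n K)
    (W : Subring (TruncatedWittVector p n K)) (hρ : ∀ z, ρ z ∈ W)
    (t : TruncatedWittVector p n K) (z : TruncatedWittVector p n R) :
    z ∈ auxIdeal ρ W hρ t ↔ ∃ a ∈ W, ρ z = t * a := Iff.rfl


end CLWitt

namespace CLWitt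

section More
variable {p : ℕ} [hp : Fact p.Prime] {n : ℕ} {R : Type*} [CommRing R]

theorem truncFrobenius_one [CharP R p] :
    truncFrobenius p n (1 : TruncatedWittVector p n R) = 1 := by
  have h : (1 : TruncatedWittVector p n R) = WittVector.truncate n 1 := (map_one _).symm
  rw [h, truncFrobenius_truncate, map_one, map_one]

theorem truncFrobenius_pow [CharP R p] (x : TruncatedWittVector p n R) (e : ℕ) :
    truncFrobenius p n (x ^ e) = truncFrobenius p n x ^ e := by
  induction e with
  | zero => rw [pow_zero, pow_zero, truncFrobenius_one]
  | succ e ih => rw [pow_succ, pow_succ, truncFrobenius_mul, ih]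

theorem coeff_truncTeichmuller (y : R) (i : Fin n) :
    (truncTeichmuller p n y).coeff i = if (i : ℕ) = 0 then y else 0 := by
  show (WittVector.truncate n (WittVector.teichmuller p y)).coeff i = _
  rw [WittVector.coeff_truncate]
  rcases Nat.eq_zero_or_pos (i : ℕ) with h | h
  · rw [h, WittVector.teichmuller_coeff_zero, if_pos rfl]
  · rw [WittVector.teichmuller_coeff_pos _ _ _ h, if_neg h.ne']

end More

/-- `p^s`-th root via iterated inverse Frobenius -/
theorem pthRoot_iter_pow (p : ℕ) [Fact p.Prime] {R : Type*} [CommRing R] [CharP R p]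
    [PerfectRing R p] (s : ℕ) (x : R) :
    (((frobeniusEquiv R p).symm)^[s] x) ^ (p ^ s) = x := by
  induction s generalizing x with
  | zero => simp
  | succ s ih =>
    rw [Function.iterate_succ_apply, pow_succ, pow_mul, ih ((frobeniusEquiv R p).symm x)]
    exact frobeniusEquiv_symm_pow_p R p x

end CLWitt

/-- coefficient sequence `A 0 = 0`, `A (k+1) = N + p * A k` -/
def ACL (N p : ℕ) : ℕ → ℕ
  | 0 => 0
  | k + 1 => N + p * ACL N p k

/-- The ideal `[𝔞_R^{>c}]` of `W_n(R)`: generated by Teichmüller representatives of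
elements of valuation `> c`. -/
noncomputable def idealGT (p n : ℕ) [hp : Fact p.Prime] {R : Type*} [CommRing R]
    (v : R → WithTop ℝ) (c : ℝ) : Ideal (TruncatedWittVector p n R) :=
  Ideal.span {z | ∃ y : R, (c : WithTop ℝ) < v y ∧ z = truncTeichmuller p n y}

set_option maxHeartbeats 2000000 in
theorem eq_zero_of_frobenius_compat_of_values_in_idealGT
    (p : ℕ) [hp : Fact p.Prime] {R : Type*} [CommRing R] [CharP R p] [PerfectRing R p]
    (v : R → WithTop ℝ)
    (hv0 : v 0 = ⊤)
    (hvmul : ∀ x y : R, v (x * y) = v x + v y)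
    (hvadd : ∀ x y : R, min (v x) (v y) ≤ v (x + y))
    (hvnonneg : ∀ x : R, 0 ≤ v x)
    (hvtop : ∀ x : R, v x = ⊤ → x = 0)
    (n N : ℕ) (hn : 1 ≤ n) (hN : 1 ≤ N)
    (ϖ : R) (w : ℝ) (hw : v ϖ = (w : ℝ)) (hw0 : 0 < w)
    (b : ℝ) (hb : b = N * w / (p - 1))
    (M : Type*) [AddCommGroup M] [Module (TruncatedWittVector p n R) M]
    [Module.Finite (TruncatedWittVector p n R) M]
    (φM : M →+ M)
    (hsemi : ∀ (a : TruncatedWittVector p n R) (x : M),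
      φM (a • x) = truncFrobenius p n a • φM x)
    (hheight : ∀ m : M, (truncTeichmuller p n ϖ ^ N) • m ∈
      Submodule.span (TruncatedWittVector p n R) (Set.range φM))
    (f : M →ₗ[TruncatedWittVector p n R] TruncatedWittVector p n R)
    (hfφ : ∀ x : M, f (φM x) = truncFrobenius p n (f x))
    (hfb : ∀ x : M, f x ∈ idealGT p n v b) :
    f = 0 := by
  classical
  -- basic facts about p, b
  have hpR1 : (1 : ℝ) < p := by exact_mod_cast hp.out.one_lt
  have hb0 : 0 ≤ b := by
    rw [hb]
    apply div_nonneg (mul_nonneg (Nat.cast_nonneg N) hw0.le)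
    linarith
  -- R is a domain
  have hϖ0 : ϖ ≠ 0 := by
    intro h
    rw [h, hv0] at hw
    exact (WithTop.top_ne_coe) hw
  haveI : Nontrivial R := nontrivial_of_ne ϖ 0 hϖ0
  haveI : NoZeroDivisors R := by
    refine ⟨fun {a c} hac => ?_⟩
    have h : v (a * c) = ⊤ := by rw [hac, hv0]
    rw [hvmul] at h
    rcases WithTop.add_eq_top.1 h with h' | h'
    · exact Or.inl (hvtop a h')
    · exact Or.inr (hvtop c h')
  haveI : IsDomain R := NoZeroDivisors.to_isDomain R
  haveI : CharP (FractionRing R) p :=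
    charP_of_injective_algebraMap (IsFractionRing.injective R (FractionRing R)) p
  have ham : Function.Injective (algebraMap R (FractionRing R)) :=
    IsFractionRing.injective R (FractionRing R)
  -- the valuation subring and the Witt subring
  set O : Subring (FractionRing R) := CLWitt.valSubring v hv0 hvmul hvadd hvtop with hOdef
  set ρ : TruncatedWittVector p n R →+* TruncatedWittVector p n (FractionRing R) :=
    CLWitt.truncMap (algebraMap R (FractionRing R)) with hρdef
  set WnO : Subring (TruncatedWittVector p n (FractionRing R)) :=
    (CLWitt.truncMap (O.subtype) (p := p) (n := n)).range with hWdef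
  have hWnOmem : ∀ z : TruncatedWittVector p n (FractionRing R),
      z ∈ WnO ↔ ∀ i, z.coeff i ∈ O := fun z => CLWitt.mem_range_truncMap_subtype_iff z
  have hρW : ∀ z, ρ z ∈ WnO := by
    intro z
    refine (hWnOmem _).2 fun i => ?_
    rw [hρdef, CLWitt.coeff_truncMap]
    exact CLWitt.algebraMap_mem_valSubring v hv0 hvmul hvadd hvnonneg hvtop _
  have hFW : ∀ a ∈ WnO, truncFrobenius p n a ∈ WnO := by
    intro a ha
    refine (hWnOmem _).2 fun i => ?_
    rw [CLWitt.coeff_truncFrobenius]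
    exact pow_mem ((hWnOmem a).1 ha i) p
  -- Step A : a uniform real bound β > b for the values of f
  have hgen : ∀ e : M, ∃ γ : ℝ, b < γ ∧
      f e ∈ Ideal.span {z | ∃ y : R, ((γ : ℝ) : WithTop ℝ) ≤ v y ∧ z = truncTeichmuller p n y} := by
    intro e
    have hgen0 : ∀ zz : TruncatedWittVector p n R, zz ∈ Ideal.span
        {z | ∃ y : R, (b : WithTop ℝ) < v y ∧ z = truncTeichmuller p n y} →
        ∃ γ : ℝ, b < γ ∧ zz ∈ Ideal.span
          {z | ∃ y : R, ((γ : ℝ) : WithTop ℝ) ≤ v y ∧ z = truncTeichmuller p n y} := by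
      intro zz hzz
      induction hzz using Submodule.span_induction with
      | mem z hz =>
        obtain ⟨y, hy, rfl⟩ := hz
        cases hvy : v y with
        | top =>
          exact ⟨b + 1, lt_add_one b, Ideal.subset_span ⟨y, by rw [hvy]; exact le_top, rfl⟩⟩
        | coe γ =>
          refine ⟨γ, ?_, Ideal.subset_span ⟨y, le_of_eq hvy.symm, rfl⟩⟩
          rw [hvy] at hy
          exact_mod_cast hy
      | zero => exact ⟨b + 1, lt_add_one b, Submodule.zero_mem _⟩
      | add x y hx hy ihx ihy =>
        obtain ⟨γ₁, h₁, m₁⟩ := ihx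
        obtain ⟨γ₂, h₂, m₂⟩ := ihy
        refine ⟨min γ₁ γ₂, lt_min h₁ h₂, Submodule.add_mem _ ?_ ?_⟩
        · refine Ideal.span_mono ?_ m₁
          rintro z ⟨y', hy', rfl⟩
          exact ⟨y', le_trans (by exact_mod_cast min_le_left γ₁ γ₂) hy', rfl⟩
        · refine Ideal.span_mono ?_ m₂
          rintro z ⟨y', hy', rfl⟩
          exact ⟨y', le_trans (by exact_mod_cast min_le_right γ₁ γ₂) hy', rfl⟩
      | smul a x hx ih =>
        obtain ⟨γ, h₁, m₁⟩ := ih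
        exact ⟨γ, h₁, Submodule.smul_mem _ a m₁⟩
    exact hgen0 (f e) (hfb e)
  obtain ⟨S, hS⟩ := Module.Finite.fg_top (R := TruncatedWittVector p n R) (M := M)
  choose γfun hγ1 hγ2 using fun e : {x // x ∈ S} => hgen (e : M)
  set T : Finset ℝ := Finset.image γfun Finset.univ with hTdef
  set β : ℝ := (insert (b + 1) T).min' (Finset.insert_nonempty _ _) with hβdef
  have hbβ : b < β := by
    have hβmem := (insert (b + 1) T).min'_mem (Finset.insert_nonempty _ _)
    rw [← hβdef] at hβmem
    rcases Finset.mem_insert.1 hβmem with h | h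
    · rw [h]; exact lt_add_one b
    · obtain ⟨e, _, he⟩ := Finset.mem_image.1 h
      rw [← he]
      exact hγ1 e
  have hβle : ∀ e : {x // x ∈ S}, β ≤ γfun e := fun e =>
    Finset.min'_le _ _ (Finset.mem_insert_of_mem (Finset.mem_image_of_mem _ (Finset.mem_univ e)))
  have hfmIβ : ∀ m : M, f m ∈ Ideal.span
      {z | ∃ y : R, ((β : ℝ) : WithTop ℝ) ≤ v y ∧ z = truncTeichmuller p n y} := by
    intro m
    have hm : m ∈ Submodule.span (TruncatedWittVector p n R) (S : Set M) := by
      rw [hS]; trivial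
    have hm2 : f m ∈ Submodule.map f (Submodule.span (TruncatedWittVector p n R) (S : Set M)) :=
      Submodule.mem_map_of_mem hm
    rw [Submodule.map_span] at hm2
    refine Submodule.span_le.2 ?_ hm2
    rintro _ ⟨e, he, rfl⟩
    refine Ideal.span_mono ?_ (hγ2 ⟨e, he⟩)
    rintro z ⟨y, hy, rfl⟩
    exact ⟨y, le_trans (by exact_mod_cast hβle ⟨e, he⟩) hy, rfl⟩
  -- Step B : choose t₀ with b < v t₀ = γ ≤ β
  obtain ⟨s, hs⟩ := pow_unbounded_of_one_lt (R := ℝ) (w / (β - b)) hpR1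
  have hps0 : (0 : ℝ) < (p : ℝ) ^ s := by positivity
  have hβb : (0 : ℝ) < β - b := by linarith
  have hwps : w < (β - b) * (p : ℝ) ^ s := by
    rw [div_lt_iff₀ hβb] at hs
    nlinarith
  set m0 : ℕ := ⌊b * (p : ℝ) ^ s / w⌋₊ + 1 with hm0def
  set γ : ℝ := m0 * w / (p : ℝ) ^ s with hγdef
  have hfloor1 : b * (p : ℝ) ^ s / w < (m0 : ℝ) := by
    rw [hm0def]
    push_cast
    linarith [Nat.lt_floor_add_one (b * (p : ℝ) ^ s / w)]
  have hγb : b < γ := by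
    rw [hγdef, lt_div_iff₀ hps0]
    rw [div_lt_iff₀ hw0] at hfloor1
    linarith
  have hγβ : γ < β := by
    rw [hγdef, div_lt_iff₀ hps0]
    have hm0le : (m0 : ℝ) ≤ b * (p : ℝ) ^ s / w + 1 := by
      rw [hm0def]
      push_cast
      linarith [Nat.floor_le (show 0 ≤ b * (p : ℝ) ^ s / w by positivity)]
    have hbw : b * (p : ℝ) ^ s / w * w = b * (p : ℝ) ^ s := div_mul_cancel₀ _ hw0.ne'
    nlinarith [mul_le_mul_of_nonneg_right hm0le hw0.le]
  set t0 : R := ((frobeniusEquiv R p).symm)^[s] (ϖ ^ m0) with ht0def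
  have ht0pow : t0 ^ (p ^ s) = ϖ ^ m0 := CLWitt.pthRoot_iter_pow p s (ϖ ^ m0)
  have hvϖm : v (ϖ ^ m0) = ((m0 * w : ℝ) : WithTop ℝ) :=
    CLWitt.hv_pow_real v hvmul hvtop ϖ w hw m0
  have hvt0 : v t0 = ((γ : ℝ) : WithTop ℝ) := by
    cases hvt : v t0 with
    | top =>
      exfalso
      have h0 : t0 = 0 := hvtop _ hvt
      rw [h0, zero_pow (pow_ne_zero s hp.out.ne_zero)] at ht0pow
      rw [← ht0pow, hv0] at hvϖm
      exact WithTop.top_ne_coe hvϖm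
    | coe α =>
      have h1 : v (t0 ^ p ^ s) = (((p ^ s : ℕ) * α : ℝ) : WithTop ℝ) :=
        CLWitt.hv_pow_real v hvmul hvtop t0 α hvt (p ^ s)
      rw [ht0pow, hvϖm] at h1
      have h2 : (m0 : ℝ) * w = (p : ℝ) ^ s * α := by exact_mod_cast h1
      have h3 : α = γ := by
        rw [hγdef]
        field_simp
        linarith
      exact_mod_cast h3
  have ht00 : t0 ≠ 0 := by
    intro h
    rw [h, hv0] at hvt0
    exact WithTop.top_ne_coe hvt0
  have ht'0 : algebraMap R (FractionRing R) t0 ≠ 0 := by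
    intro h
    exact ht00 (ham (by rw [h, map_zero]))
  -- Step C : the ideals J k and the key induction
  set Jid : ℕ → Ideal (TruncatedWittVector p n R) := fun k =>
    CLWitt.auxIdeal ρ WnO hρW
      (truncTeichmuller p n (algebraMap R (FractionRing R) t0) ^ (p ^ k)) with hJdef
  have hJF : ∀ k z, z ∈ Jid k → truncFrobenius p n z ∈ Jid (k + 1) := by
    rintro k z ⟨a, ha, ea⟩
    refine ⟨truncFrobenius p n a, hFW a ha, ?_⟩
    rw [hρdef, CLWitt.truncMap_truncFrobenius, ← hρdef, ea, CLWitt.truncFrobenius_mul,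
      CLWitt.truncFrobenius_pow, CLWitt.truncFrobenius_teichmuller,
      CLWitt.truncTeichmuller_pow, ← pow_mul]
    congr 2
    ring
  have hJ0 : ∀ m : M, f m ∈ Jid 0 := by
    intro m
    refine Submodule.span_le.2 ?_ (hfmIβ m)
    rintro z ⟨y, hy, rfl⟩
    set u : FractionRing R :=
      algebraMap R (FractionRing R) y * (algebraMap R (FractionRing R) t0)⁻¹ with hudef
    have hu : u ∈ O := by
      refine ⟨y, t0, ht00, ?_, ?_⟩
      · rw [hudef]
        field_simp
      · rw [hvt0]
        refine le_trans ?_ hy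
        exact_mod_cast le_of_lt hγβ
    refine ⟨truncTeichmuller p n u, (hWnOmem _).2 fun i => ?_, ?_⟩
    · rw [CLWitt.coeff_truncTeichmuller]
      split
      · exact hu
      · exact O.zero_mem
    · rw [pow_zero, pow_one, hρdef, CLWitt.truncMap_truncTeichmuller,
        ← CLWitt.truncTeichmuller_mul]
      congr 1
      rw [hudef]
      field_simp
  have hQ : ∀ k, ∀ m : M,
      truncTeichmuller p n ϖ ^ (ACL N p k) * f m ∈ Jid k := by
    intro k
    induction k with
    | zero =>
      intro m
      have h0 : ACL N p 0 = 0 := rfl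
      rw [h0, pow_zero, one_mul]
      exact hJ0 m
    | succ k ih =>
      intro m
      obtain ⟨c, hsupp, hsum⟩ := Submodule.mem_span_set.1 (hheight m)
      have hfs : truncTeichmuller p n ϖ ^ N * f m = c.sum fun z r => r * f z := by
        have h1 := congrArg f hsum
        rw [map_smul, smul_eq_mul, map_finsuppSum] at h1
        rw [← h1]
        exact (Finsupp.sum_congr fun z _ => by rw [map_smul, smul_eq_mul]).symm
      have key : truncTeichmuller p n ϖ ^ (ACL N p (k + 1)) * f m
          = c.sum fun z r => truncTeichmuller p n ϖ ^ (p * ACL N p k) * (r * f z) := by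
        calc truncTeichmuller p n ϖ ^ (ACL N p (k + 1)) * f m
            = truncTeichmuller p n ϖ ^ (p * ACL N p k)
              * (truncTeichmuller p n ϖ ^ N * f m) := by
              rw [show ACL N p (k + 1) = N + p * ACL N p k from rfl, pow_add]
              ring
          _ = truncTeichmuller p n ϖ ^ (p * ACL N p k) * c.sum fun z r => r * f z := by
              rw [hfs]
          _ = c.sum fun z r => truncTeichmuller p n ϖ ^ (p * ACL N p k) * (r * f z) :=
              Finsupp.mul_sum _ _
      rw [key, Finsupp.sum]
      refine Ideal.sum_mem _ fun z hz => ?_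
      obtain ⟨u, rfl⟩ := hsupp hz
      rw [show truncTeichmuller p n ϖ ^ (p * ACL N p k) * (c (φM u) * f (φM u))
          = c (φM u) * (truncTeichmuller p n ϖ ^ (p * ACL N p k) * f (φM u)) from by ring]
      refine Ideal.mul_mem_left _ _ ?_
      rw [hfφ u]
      have hFrw : truncTeichmuller p n ϖ ^ (p * ACL N p k) * truncFrobenius p n (f u)
          = truncFrobenius p n (truncTeichmuller p n ϖ ^ (ACL N p k) * f u) := by
        rw [CLWitt.truncFrobenius_mul, CLWitt.truncFrobenius_pow,
          CLWitt.truncFrobenius_teichmuller, CLWitt.truncTeichmuller_pow, ← pow_mul]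
      rw [hFrw]
      exact hJF k _ (ih u)
  -- Step D : conclusion
  apply LinearMap.ext
  intro m
  show f m = 0
  apply TruncatedWittVector.ext
  intro i
  rw [TruncatedWittVector.coeff_zero]
  by_contra hx
  obtain ⟨ξ, hξ⟩ : ∃ ξ : ℝ, v ((f m).coeff i) = ((ξ : ℝ) : WithTop ℝ) := by
    cases hvx : v ((f m).coeff i) with
    | top => exact absurd (hvtop _ hvx) hx
    | coe ξ => exact ⟨ξ, rfl⟩
  obtain ⟨k, hk⟩ := pow_unbounded_of_one_lt (R := ℝ) (ξ / (γ - b)) hpR1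
  have hγb' : (0 : ℝ) < γ - b := by linarith
  have hkξ : ξ < (p : ℝ) ^ k * (γ - b) := by
    rw [div_lt_iff₀ hγb'] at hk
    linarith
  obtain ⟨a, ha, ea⟩ := hQ k m
  have hc := congrArg (fun z => TruncatedWittVector.coeff i z) ea
  simp only [hρdef, CLWitt.coeff_truncMap] at hc
  rw [← CLWitt.truncTeichmuller_pow, ← CLWitt.truncTeichmuller_pow,
    CLWitt.truncTeichmuller_mul_coeff, CLWitt.truncTeichmuller_mul_coeff] at hc
  obtain ⟨x', y', hy'0, e', l'⟩ := (hWnOmem a).1 ha i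
  -- multiply hc by (algebraMap y')
  have hc2 : algebraMap R (FractionRing R) ((ϖ ^ ACL N p k) ^ p ^ (i : ℕ) * (f m).coeff i * y')
      = algebraMap R (FractionRing R) ((t0 ^ p ^ k) ^ p ^ (i : ℕ) * x') := by
    calc algebraMap R (FractionRing R) ((ϖ ^ ACL N p k) ^ p ^ (i : ℕ) * (f m).coeff i * y')
        = algebraMap R (FractionRing R) ((ϖ ^ ACL N p k) ^ p ^ (i : ℕ) * (f m).coeff i)
          * algebraMap R (FractionRing R) y' := by rw [map_mul]
      _ = (algebraMap R (FractionRing R) t0 ^ p ^ k) ^ p ^ (i : ℕ)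
          * (TruncatedWittVector.coeff i a * algebraMap R (FractionRing R) y') := by
          rw [hc]; ring
      _ = (algebraMap R (FractionRing R) t0 ^ p ^ k) ^ p ^ (i : ℕ)
          * algebraMap R (FractionRing R) x' := by rw [e']
      _ = algebraMap R (FractionRing R) ((t0 ^ p ^ k) ^ p ^ (i : ℕ) * x') := by
          rw [map_mul, map_pow, map_pow]
  have hE := congrArg v (ham hc2)
  rw [hvmul, hvmul, hvmul] at hE
  have hvA : v ((ϖ ^ ACL N p k) ^ p ^ (i : ℕ))
      = (((p ^ (i : ℕ) : ℕ) * ((ACL N p k : ℝ) * w) : ℝ) : WithTop ℝ) :=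
    CLWitt.hv_pow_real v hvmul hvtop _ _ (CLWitt.hv_pow_real v hvmul hvtop ϖ w hw _) _
  have hvB : v ((t0 ^ p ^ k) ^ p ^ (i : ℕ))
      = (((p ^ (i : ℕ) : ℕ) * ((p ^ k : ℕ) * γ) : ℝ) : WithTop ℝ) :=
    CLWitt.hv_pow_real v hvmul hvtop _ _ (CLWitt.hv_pow_real v hvmul hvtop t0 γ hvt0 _) _
  obtain ⟨η, hη⟩ : ∃ η : ℝ, v y' = ((η : ℝ) : WithTop ℝ) := by
    cases hvy : v y' with
    | top => exact absurd (hvtop _ hvy) hy'0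
    | coe η => exact ⟨η, rfl⟩
  rw [hvA, hvB, hξ, hη] at hE
  obtain ⟨ξ', hξ'⟩ : ∃ ξ' : ℝ, v x' = ((ξ' : ℝ) : WithTop ℝ) := by
    cases hvx' : v x' with
    | top =>
      rw [hvx'] at hE
      rw [← WithTop.coe_add, ← WithTop.coe_add, WithTop.add_top] at hE
      exact absurd hE (WithTop.coe_ne_top)
    | coe ξ' => exact ⟨ξ', rfl⟩
  rw [hξ'] at hE
  rw [← WithTop.coe_add, ← WithTop.coe_add, ← WithTop.coe_add] at hE
  have hEr : (p : ℝ) ^ (i : ℕ) * ((ACL N p k : ℝ) * w) + ξ + η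
      = (p : ℝ) ^ (i : ℕ) * ((p : ℝ) ^ k * γ) + ξ' := by
    have := WithTop.coe_inj.1 hE
    push_cast at this ⊢
    linarith
  have hl : η ≤ ξ' := by
    rw [hη, hξ'] at l'
    exact_mod_cast l'
  -- the arithmetic of ACL
  have hNw : (N : ℝ) * w = b * ((p : ℝ) - 1) := by
    have hp1 : (p : ℝ) - 1 ≠ 0 := by linarith
    rw [hb, div_mul_cancel₀ _ hp1]
  have hACL : ∀ k', (ACL N p k' : ℝ) * w = b * ((p : ℝ) ^ k' - 1) := by
    intro k'
    induction k' with
    | zero =>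
      show ((ACL N p 0 : ℕ) : ℝ) * w = _
      rw [show ACL N p 0 = 0 from rfl]
      push_cast
      ring
    | succ k' ih =>
      rw [show ACL N p (k' + 1) = N + p * ACL N p k' from rfl]
      push_cast
      push_cast at ih
      linear_combination hNw + (p : ℝ) * ih
  have hAk := hACL k
  have hPi1 : (1 : ℝ) ≤ (p : ℝ) ^ (i : ℕ) := one_le_pow₀ hpR1.le
  have hPk0 : (0 : ℝ) < (p : ℝ) ^ k := by positivity
  have hprod : 0 ≤ ((p : ℝ) ^ (i : ℕ) - 1) * ((p : ℝ) ^ k * (γ - b)) :=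
    mul_nonneg (by linarith) (mul_nonneg hPk0.le (by linarith))
  have hPib : 0 ≤ (p : ℝ) ^ (i : ℕ) * b := mul_nonneg (by linarith) hb0
  nlinarith [hEr, hl, hAk, hkξ, hprod, hPib]
end

section
/- Let c ≥ 0 be a real number and n ≥ 1 an integer. An element x = (x_0, …, x_{n−1}) ∈ W_n(R) belongs to the ideal [𝔞_R^{>c}] if and only if v(x_i) > p^i·c for all 0 ≤ i ≤ n−1; likewise, x belongs to [𝔞_R^{≥c}] if and only if v(x_i) ≥ p^i·c for all 0 ≤ i ≤ n−1. -/
namespace CLaux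
open WittVector MvPolynomial Finset

variable {p : ℕ} [hp : Fact p.Prime]


lemma ghostComponent_map {R S : Type*} [CommRing R] [CommRing S] (f : R →+* S)
    (x : WittVector p R) (n : ℕ) :
    ghostComponent n (WittVector.map f x) = f (ghostComponent n x) := by
  rw [ghostComponent_apply, ghostComponent_apply, aeval_def, aeval_def,
    eval₂_comp_left f (algebraMap ℤ R) x.coeff,
    show (WittVector.map f x).coeff = f ∘ x.coeff from funext fun i => WittVector.map_coeff f x i]
  congr 1
  exact Subsingleton.elim _ _

lemma wittExt {σ : Type*} {x y : WittVector p (MvPolynomial σ ℤ)}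
    (h : ∀ n, ghostComponent n x = ghostComponent n y) : x = y := by
  have hι : Function.Injective
      (MvPolynomial.map (Int.castRingHom ℚ) : MvPolynomial σ ℤ →+* MvPolynomial σ ℚ) :=
    MvPolynomial.map_injective _ Int.cast_injective
  apply WittVector.map_injective _ hι
  haveI : Invertible (p : MvPolynomial σ ℚ) := by
    haveI : Invertible (p : ℚ) :=
      invertibleOfNonzero (by exact_mod_cast hp.out.ne_zero)
    have := Invertible.map (C : ℚ →+* MvPolynomial σ ℚ) (p : ℚ)
    exact this.copy _ (by simp)
  apply (WittVector.ghostMap.bijective_of_invertible p (MvPolynomial σ ℚ)).injective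
  funext n
  rw [WittVector.ghostMap_apply, WittVector.ghostMap_apply, ghostComponent_map,
    ghostComponent_map, h n]

lemma ghost_cons {B : Type*} [CommRing B] (b : B) (w : WittVector p B) (n : ℕ) :
    ghostComponent n (teichmuller p b + verschiebung w)
      = ghostComponent n (WittVector.mk p (fun j => Nat.rec b (fun k _ => w.coeff k) j)) := by
  cases n with
  | zero =>
    simp only [map_add, ghostComponent_teichmuller, ghostComponent_zero_verschiebung,
      ghostComponent_apply, aeval_wittPolynomial, WittVector.coeff_mk]
    simp
  | succ n =>
    rw [map_add, ghostComponent_teichmuller, ghostComponent_verschiebung,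
      ghostComponent_apply n w, ghostComponent_apply]
    simp only [aeval_wittPolynomial, WittVector.coeff_mk]
    rw [Finset.sum_range_succ' (fun i => (p : B) ^ i *
        (Nat.rec b (fun k _ => w.coeff k) i : B) ^ p ^ (n + 1 - i)), Finset.mul_sum, add_comm]
    congr 1
    · refine Finset.sum_congr rfl fun i hi => ?_
      have h : 1 + n - (1 + i) = n - i := by omega
      rw [Nat.succ_sub_succ]
      ring
    · show b ^ p ^ (n + 1) = (p : B) ^ 0 * b ^ p ^ (n + 1 - 0)
      simp

lemma cons_eq {A : Type*} [CommRing A] (a : A) (u : WittVector p A) :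
    teichmuller p a + verschiebung u
      = WittVector.mk p (fun n => Nat.rec a (fun k _ => u.coeff k) n) := by
  let f : MvPolynomial (Option ℕ) ℤ →+* A :=
    (eval₂Hom (Int.castRingHom A) (fun o => Option.elim o a u.coeff))
  set aU : MvPolynomial (Option ℕ) ℤ := X none with haU
  set uU : WittVector p (MvPolynomial (Option ℕ) ℤ) := WittVector.mk p (fun i => X (some i))
    with huU
  have key : teichmuller p aU + verschiebung uU
      = WittVector.mk p (fun n => Nat.rec aU (fun k _ => uU.coeff k) n) :=
    wittExt (fun n => ghost_cons aU uU n)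
  have cmap := congrArg (WittVector.map f) key
  rw [map_add, map_teichmuller, map_verschiebung] at cmap
  have h1 : f aU = a := by simp [haU, f]
  have h2 : WittVector.map f uU = u := by
    ext n
    rw [WittVector.map_coeff]
    simp [huU, f, WittVector.coeff_mk]
  have h3 : WittVector.map f (WittVector.mk p (fun n => Nat.rec aU (fun k _ => uU.coeff k) n))
      = WittVector.mk p (fun n => Nat.rec a (fun k _ => u.coeff k) n) := by
    ext n
    rw [WittVector.map_coeff, WittVector.coeff_mk, WittVector.coeff_mk]
    cases n with
    | zero => exact h1
    | succ k => simp [huU, f, WittVector.coeff_mk]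
  rw [h1, h2, h3] at cmap
  exact cmap

lemma cons_coeff_zero {A : Type*} [CommRing A] (a : A) (u : WittVector p A) :
    (teichmuller p a + verschiebung u).coeff 0 = a := by
  rw [cons_eq, WittVector.coeff_mk]
  rfl

lemma cons_coeff_succ {A : Type*} [CommRing A] (a : A) (u : WittVector p A) (n : ℕ) :
    (teichmuller p a + verschiebung u).coeff (n + 1) = u.coeff n := by
  rw [cons_eq, WittVector.coeff_mk]

/-- The "tail" of a Witt vector. -/
noncomputable def shift {A : Type*} [CommRing A] (Z : WittVector p A) : WittVector p A :=
  WittVector.mk p (fun j => Z.coeff (j + 1))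

lemma shift_spec {A : Type*} [CommRing A] (Z : WittVector p A) :
    teichmuller p (Z.coeff 0) + verschiebung (shift Z) = Z := by
  rw [cons_eq]
  ext n
  rw [WittVector.coeff_mk]
  cases n with
  | zero => rfl
  | succ k => simp [shift, WittVector.coeff_mk]

lemma ghost_teich_mul {B : Type*} [CommRing B] (b : B) (w : WittVector p B) (n : ℕ) :
    ghostComponent n (teichmuller p b * w)
      = ghostComponent n (WittVector.mk p (fun j => b ^ p ^ j * w.coeff j)) := by
  rw [map_mul, ghostComponent_teichmuller, ghostComponent_apply, aeval_wittPolynomial,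
    ghostComponent_apply, aeval_wittPolynomial]
  simp only [WittVector.coeff_mk]
  rw [Finset.mul_sum]
  refine Finset.sum_congr rfl fun i hi => ?_
  have hin : i ≤ n := Nat.lt_succ_iff.mp (Finset.mem_range.mp hi)
  rw [mul_pow, ← pow_mul, ← pow_add, Nat.add_sub_cancel' hin]
  ring

lemma teich_mul {A : Type*} [CommRing A] (a : A) (u : WittVector p A) :
    teichmuller p a * u = WittVector.mk p (fun n => a ^ p ^ n * u.coeff n) := by
  let f : MvPolynomial (Option ℕ) ℤ →+* A :=
    (eval₂Hom (Int.castRingHom A) (fun o => Option.elim o a u.coeff))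
  set aU : MvPolynomial (Option ℕ) ℤ := X none with haU
  set uU : WittVector p (MvPolynomial (Option ℕ) ℤ) := WittVector.mk p (fun i => X (some i))
    with huU
  have key : teichmuller p aU * uU = WittVector.mk p (fun n => aU ^ p ^ n * uU.coeff n) :=
    wittExt (fun n => ghost_teich_mul aU uU n)
  have cmap := congrArg (WittVector.map f) key
  rw [map_mul, map_teichmuller] at cmap
  have h1 : f aU = a := by simp [haU, f]
  have h2 : WittVector.map f uU = u := by
    ext n
    rw [WittVector.map_coeff]
    simp [huU, f, WittVector.coeff_mk]
  have h3 : WittVector.map f (WittVector.mk p (fun n => aU ^ p ^ n * uU.coeff n))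
      = WittVector.mk p (fun n => a ^ p ^ n * u.coeff n) := by
    ext n
    rw [WittVector.map_coeff, WittVector.coeff_mk, WittVector.coeff_mk]
    simp [haU, huU, f, WittVector.coeff_mk]
  rw [h1, h2, h3] at cmap
  exact cmap

lemma teich_mul_coeff {A : Type*} [CommRing A] (a : A) (u : WittVector p A) (n : ℕ) :
    (teichmuller p a * u).coeff n = a ^ p ^ n * u.coeff n := by
  rw [teich_mul, WittVector.coeff_mk]

/-- The universal polynomial giving the `k`-th coefficient of a sum of two
Teichmüller representatives. -/
noncomputable def TP (p : ℕ) [hp : Fact p.Prime] (k : ℕ) : MvPolynomial (Fin 2) ℤ :=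
  (teichmuller p (X 0 : MvPolynomial (Fin 2) ℤ) + teichmuller p (X 1)).coeff k

lemma TP_ghost (k : ℕ) :
    ∑ i ∈ range (k + 1), (p : MvPolynomial (Fin 2) ℤ) ^ i * (TP p i) ^ p ^ (k - i)
      = (X 0 : MvPolynomial (Fin 2) ℤ) ^ p ^ k + (X 1 : MvPolynomial (Fin 2) ℤ) ^ p ^ k := by
  have h := ghostComponent_apply (p := p) k
    (teichmuller p (X 0 : MvPolynomial (Fin 2) ℤ) + teichmuller p (X 1))
  rw [aeval_wittPolynomial, map_add, ghostComponent_teichmuller, ghostComponent_teichmuller] at h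
  exact h.symm

lemma TP_homog (k : ℕ) : (TP p k).IsHomogeneous (p ^ k) := by
  induction k using Nat.strong_induction_on with
  | _ k ih =>
  have hid := TP_ghost (p := p) k
  rw [Finset.sum_range_succ, Nat.sub_self, pow_zero, pow_one] at hid
  have hCp : ∀ i : ℕ, ((p : MvPolynomial (Fin 2) ℤ)) ^ i = C ((p : ℤ) ^ i) := by
    intro i
    rw [map_pow, map_natCast]
  have hk : (C ((p : ℤ) ^ k) : MvPolynomial (Fin 2) ℤ) * TP p k
      = (X 0 : MvPolynomial (Fin 2) ℤ) ^ p ^ k + (X 1 : MvPolynomial (Fin 2) ℤ) ^ p ^ k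
        - ∑ i ∈ range k, (p : MvPolynomial (Fin 2) ℤ) ^ i * TP p i ^ p ^ (k - i) := by
    rw [← hid, ← hCp k]
    ring
  have hhom : ((C ((p : ℤ) ^ k) : MvPolynomial (Fin 2) ℤ) * TP p k).IsHomogeneous (p ^ k) := by
    rw [hk]
    refine IsHomogeneous.sub (IsHomogeneous.add ?_ ?_)
      (IsHomogeneous.sum _ _ _ fun i hi => ?_)
    · simpa using (isHomogeneous_X ℤ (0 : Fin 2)).pow (p ^ k)
    · simpa using (isHomogeneous_X ℤ (1 : Fin 2)).pow (p ^ k)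
    · rw [hCp i]
      have h2 := (ih i (Finset.mem_range.mp hi)).pow (p ^ (k - i))
      have h3 : p ^ i * p ^ (k - i) = p ^ k := by
        rw [← pow_add]
        congr 1
        have := Finset.mem_range.mp hi
        omega
      rw [h3] at h2
      have h4 := (isHomogeneous_C (σ := Fin 2) ((p : ℤ) ^ i)).mul h2
      simpa using h4
  intro d hd
  refine hhom ?_
  rw [coeff_C_mul]
  exact mul_ne_zero (pow_ne_zero _ (by exact_mod_cast hp.out.ne_zero)) hd

lemma TP_eval {A : Type*} [CommRing A] (a b : A) (k : ℕ) :
    (teichmuller p a + teichmuller p b).coeff k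
      = eval₂ (Int.castRingHom A) (![a, b] : Fin 2 → A) (TP p k) := by
  let f : MvPolynomial (Fin 2) ℤ →+* A := eval₂Hom (Int.castRingHom A) ![a, b]
  have h : teichmuller p a + teichmuller p b
      = WittVector.map f (teichmuller p (X 0) + teichmuller p (X 1)) := by
    rw [map_add, map_teichmuller, map_teichmuller,
      show f (X 0) = a by simp [f], show f (X 1) = b by simp [f]]
  rw [h, WittVector.map_coeff]
  simp only [f, coe_eval₂Hom]
  rfl

section Valuation

variable {R : Type*} [CommRing R] {v : R → WithTop ℝ}

lemma v_one_nonneg (hvmul : ∀ x y : R, v (x * y) = v x + v y) : (0 : WithTop ℝ) ≤ v 1 := by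
  have h := hvmul 1 1
  rw [one_mul] at h
  rcases eq_or_ne (v 1) ⊤ with h1 | h1
  · rw [h1]; exact le_top
  · obtain ⟨t, ht⟩ := WithTop.ne_top_iff_exists.mp h1
    rw [← ht] at h ⊢
    have h2 : t = t + t := by exact_mod_cast h
    have h3 : t = 0 := by linarith
    simp [h3]

lemma v_pow_le (hvmul : ∀ x y : R, v (x * y) = v x + v y) {d : ℝ} {y : R}
    (hd : (d : WithTop ℝ) ≤ v y) (m : ℕ) : (((m : ℝ) * d : ℝ) : WithTop ℝ) ≤ v (y ^ m) := by
  induction m with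
  | zero => simpa using v_one_nonneg hvmul
  | succ m ih =>
    have h : (((m + 1 : ℕ) : ℝ) * d) = ((m : ℕ) : ℝ) * d + d := by push_cast; ring
    rw [h, WithTop.coe_add, pow_succ, hvmul]
    exact add_le_add ih hd

lemma v_pow_eq (hvmul : ∀ x y : R, v (x * y) = v x + v y) {t : ℝ} {y : R}
    (ht : v y = (t : WithTop ℝ)) (m : ℕ) :
    v (y ^ (m + 1)) = ((((m : ℝ) + 1) * t : ℝ) : WithTop ℝ) := by
  induction m with
  | zero => simp [pow_one, ht]
  | succ m ih =>
    rw [pow_succ, hvmul, ih, ht, ← WithTop.coe_add]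
    rw [WithTop.coe_eq_coe]
    push_cast
    ring

lemma v_sum_ge (hv0 : v 0 = ⊤) (hvadd : ∀ x y : R, min (v x) (v y) ≤ v (x + y))
    {ι : Type*} (s : Finset ι) (g : ι → R) (w : WithTop ℝ) (h : ∀ i ∈ s, w ≤ v (g i)) :
    w ≤ v (∑ i ∈ s, g i) := by
  classical
  induction s using Finset.cons_induction with
  | empty => rw [Finset.sum_empty, hv0]; exact le_top
  | cons a s ha ih =>
    rw [Finset.sum_cons]
    refine le_trans (le_min (h a (Finset.mem_cons_self a s)) ?_) (hvadd _ _)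
    exact ih fun i hi => h i (Finset.mem_cons_of_mem hi)

lemma v_prod_ge (hvmul : ∀ x y : R, v (x * y) = v x + v y)
    {ι : Type*} (s : Finset ι) (e : ι → ℕ) (g : ι → R) (d : ℝ)
    (hg : ∀ i, (d : WithTop ℝ) ≤ v (g i)) :
    ((((∑ i ∈ s, e i : ℕ) : ℝ) * d : ℝ) : WithTop ℝ) ≤ v (∏ i ∈ s, g i ^ e i) := by
  classical
  induction s using Finset.cons_induction with
  | empty => simpa using v_one_nonneg hvmul
  | cons a s ha ih =>
    rw [Finset.prod_cons, hvmul, Finset.sum_cons]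
    have h : ((((e a + ∑ i ∈ s, e i : ℕ) : ℝ) * d : ℝ) : WithTop ℝ)
        = (((e a : ℝ) * d : ℝ) : WithTop ℝ) + ((((∑ i ∈ s, e i : ℕ) : ℝ) * d : ℝ) : WithTop ℝ) := by
      rw [← WithTop.coe_add]
      norm_cast
      push_cast
      ring
    rw [h]
    exact add_le_add (v_pow_le hvmul (hg a) (e a)) ih

lemma v_teichadd_le (hvmul : ∀ x y : R, v (x * y) = v x + v y)
    (hv0 : v 0 = ⊤) (hvadd : ∀ x y : R, min (v x) (v y) ≤ v (x + y))
    (hvnonneg : ∀ x : R, 0 ≤ v x)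
    (a b : R) (k : ℕ) (d : ℝ) (ha : (d : WithTop ℝ) ≤ v a) (hb : (d : WithTop ℝ) ≤ v b) :
    (((p : ℝ) ^ k * d : ℝ) : WithTop ℝ) ≤ v ((teichmuller p a + teichmuller p b).coeff k) := by
  rw [TP_eval, eval₂_eq]
  refine v_sum_ge hv0 hvadd _ _ _ fun m hm => ?_
  have h1 : (Finsupp.weight 1 m : ℕ) = p ^ k := TP_homog k (mem_support_iff.mp hm)
  have h2 : (∑ i ∈ m.support, m i) = p ^ k := by
    rw [← h1, ← Finsupp.degree_apply, Finsupp.degree_eq_weight_one]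
    rfl
  have hg : ∀ i : Fin 2, (d : WithTop ℝ) ≤ v ((![a, b] : Fin 2 → R) i) := by
    intro i
    fin_cases i
    · simpa using ha
    · simpa using hb
  have hprod := v_prod_ge hvmul m.support (fun i => m i) (fun i => (![a, b] : Fin 2 → R) i) d hg
  rw [h2] at hprod
  calc (((p : ℝ) ^ k * d : ℝ) : WithTop ℝ)
      = 0 + (((p : ℝ) ^ k * d : ℝ) : WithTop ℝ) := (zero_add _).symm
    _ ≤ v ((Int.castRingHom R) (coeff m (TP p k)))
        + v (∏ i ∈ m.support, (![a, b] : Fin 2 → R) i ^ m i) := by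
        refine add_le_add (hvnonneg _) ?_
        have hcast : (((p ^ k : ℕ) : ℝ) * d : ℝ) = ((p : ℝ) ^ k * d : ℝ) := by push_cast; ring
        rw [← hcast]
        exact hprod
    _ = v ((Int.castRingHom R) (coeff m (TP p k))
        * ∏ i ∈ m.support, (![a, b] : Fin 2 → R) i ^ m i) := (hvmul _ _).symm

end Valuation

section Red

variable {p : ℕ} [hp : Fact p.Prime] {R : Type*} [CommRing R] {v : R → WithTop ℝ}

/-- Axioms for a "threshold relation" between real thresholds and values in `WithTop ℝ`,
satisfied both by `fun r w => ↑r < w` and `fun r w => ↑r ≤ w`. -/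
structure RedAx (red : ℝ → WithTop ℝ → Prop) : Prop where
  top : ∀ r : ℝ, red r ⊤
  mono : ∀ (r : ℝ) (w w' : WithTop ℝ), red r w → w ≤ w' → red r w'
  pick : ∀ (r : ℝ) (w : WithTop ℝ), red r w → ∃ d : ℝ, red r (d : WithTop ℝ) ∧ (d : WithTop ℝ) ≤ w
  scale : ∀ κ r d : ℝ, 0 < κ → red r (d : WithTop ℝ) → red (κ * r) ((κ * d : ℝ) : WithTop ℝ)
  unscale : ∀ κ r t : ℝ, 0 < κ → red (κ * r) ((κ * t : ℝ) : WithTop ℝ) → red r (t : WithTop ℝ)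

variable {red : ℝ → WithTop ℝ → Prop}

lemma RedAx.min' (hred : RedAx red) {r : ℝ} {w1 w2 : WithTop ℝ}
    (h1 : red r w1) (h2 : red r w2) : red r (min w1 w2) := by
  rcases min_cases w1 w2 with ⟨h, -⟩ | ⟨h, -⟩ <;> rw [h] <;> assumption

lemma redAx_lt : RedAx (fun r w => (r : WithTop ℝ) < w) where
  top r := WithTop.coe_lt_top r
  mono r w w' h hle := lt_of_lt_of_le h hle
  pick r w h := by
    rcases eq_or_ne w ⊤ with rfl | hw
    · exact ⟨r + 1, by exact_mod_cast lt_add_one r, le_top⟩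
    · obtain ⟨t, ht⟩ := WithTop.ne_top_iff_exists.mp hw
      rw [← ht] at h
      exact ⟨t, h, le_of_eq ht⟩
  scale κ r d hκ h := by
    rw [WithTop.coe_lt_coe] at h ⊢
    exact mul_lt_mul_of_pos_left h hκ
  unscale κ r t hκ h := by
    rw [WithTop.coe_lt_coe] at h ⊢
    exact lt_of_mul_lt_mul_left h (le_of_lt hκ)

lemma redAx_le : RedAx (fun r w => (r : WithTop ℝ) ≤ w) where
  top r := le_top
  mono r w w' h hle := le_trans h hle
  pick r w h := ⟨r, le_refl _, h⟩
  scale κ r d hκ h := by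
    rw [WithTop.coe_le_coe] at h ⊢
    exact mul_le_mul_of_nonneg_left h (le_of_lt hκ)
  unscale κ r t hκ h := by
    rw [WithTop.coe_le_coe] at h ⊢
    exact le_of_mul_le_mul_left h hκ

variable (hred : RedAx red)
  (hv0 : v 0 = ⊤) (hvmul : ∀ x y : R, v (x * y) = v x + v y)
  (hvadd : ∀ x y : R, min (v x) (v y) ≤ v (x + y)) (hvnonneg : ∀ x : R, 0 ≤ v x)

include hred hvmul

lemma red_pow {y : R} {r : ℝ} (k : ℕ) (hy : red r (v y)) :
    red ((p : ℝ) ^ k * r) (v (y ^ p ^ k)) := by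
  obtain ⟨d, hd1, hd2⟩ := hred.pick r (v y) hy
  have h := v_pow_le hvmul hd2 (p ^ k)
  have hc : (((p ^ k : ℕ) : ℝ) * d : ℝ) = ((p : ℝ) ^ k * d : ℝ) := by push_cast; ring
  rw [hc] at h
  have hκ : (0 : ℝ) < (p : ℝ) ^ k := pow_pos (by exact_mod_cast hp.out.pos) k
  exact hred.mono _ _ _ (hred.scale _ _ _ hκ hd1) h

lemma red_root {z : R} {r : ℝ} (i : ℕ)
    (h : red ((p : ℝ) ^ i * r) (v (z ^ p ^ i))) : red r (v z) := by
  rcases eq_or_ne (v z) ⊤ with hz | hz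
  · rw [hz]; exact hred.top r
  · obtain ⟨t, ht⟩ := WithTop.ne_top_iff_exists.mp hz
    obtain ⟨m, hm⟩ : ∃ m : ℕ, p ^ i = m + 1 :=
      ⟨p ^ i - 1, (Nat.succ_pred_eq_of_pos (pow_pos hp.out.pos i)).symm⟩
    have he := v_pow_eq hvmul ht.symm m
    have he2 : v (z ^ p ^ i) = (((p : ℝ) ^ i * t : ℝ) : WithTop ℝ) := by
      rw [hm, he]
      congr 1
      have hmp : ((m : ℝ) + 1) = (p : ℝ) ^ i := by
        have h5 : (((m + 1 : ℕ)) : ℝ) = (((p ^ i : ℕ)) : ℝ) := by rw [hm]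
        push_cast at h5
        linarith
      rw [hmp]
    rw [he2] at h
    rw [← ht]
    exact hred.unscale _ _ _ (pow_pos (by exact_mod_cast hp.out.pos) i) h

include hv0 hvadd hvnonneg

lemma red_teichadd {a b : R} {r : ℝ} (k : ℕ) (ha : red r (v a)) (hb : red r (v b)) :
    red ((p : ℝ) ^ k * r) (v ((teichmuller p a + teichmuller p b).coeff k)) := by
  obtain ⟨d, hd1, hd2⟩ := hred.pick r (min (v a) (v b)) (hred.min' ha hb)
  have h := v_teichadd_le (p := p) hvmul hv0 hvadd hvnonneg a b k d
    (le_trans hd2 (min_le_left _ _)) (le_trans hd2 (min_le_right _ _))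
  have hκ : (0 : ℝ) < (p : ℝ) ^ k := pow_pos (by exact_mod_cast hp.out.pos) k
  exact hred.mono _ _ _ (hred.scale _ _ _ hκ hd1) h

lemma red_addclosed :
    ∀ (m : ℕ) (cc : ℝ) (X Y : WittVector p R),
      (∀ j, j < m → red ((p : ℝ) ^ j * cc) (v (X.coeff j))) →
      (∀ j, j < m → red ((p : ℝ) ^ j * cc) (v (Y.coeff j))) →
      ∀ j, j < m → red ((p : ℝ) ^ j * cc) (v ((X + Y).coeff j)) := by
  intro m
  induction m with
  | zero => intro cc X Y hX hY j hj; omega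
  | succ m ih =>
    intro cc X Y hX hY j hj
    have h0X := hX 0 (by omega)
    have h0Y := hY 0 (by omega)
    rw [pow_zero, one_mul] at h0X h0Y
    cases j with
    | zero =>
      rw [pow_zero, one_mul, WittVector.add_coeff_zero]
      exact hred.mono _ _ _ (hred.min' h0X h0Y) (hvadd _ _)
    | succ j =>
      have hT : teichmuller p (X.coeff 0) + teichmuller p (Y.coeff 0)
          = teichmuller p (X.coeff 0 + Y.coeff 0)
            + verschiebung (shift (teichmuller p (X.coeff 0) + teichmuller p (Y.coeff 0))) := by
        have h0 : (teichmuller p (X.coeff 0) + teichmuller p (Y.coeff 0)).coeff 0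
            = X.coeff 0 + Y.coeff 0 := by
          rw [WittVector.add_coeff_zero, teichmuller_coeff_zero, teichmuller_coeff_zero]
        conv_lhs => rw [← shift_spec (teichmuller p (X.coeff 0) + teichmuller p (Y.coeff 0))]
        rw [h0]
      have hdecomp : X + Y = teichmuller p (X.coeff 0 + Y.coeff 0)
          + verschiebung ((shift (teichmuller p (X.coeff 0) + teichmuller p (Y.coeff 0))
            + shift X) + shift Y) := by
        calc X + Y = (teichmuller p (X.coeff 0) + verschiebung (shift X))
              + (teichmuller p (Y.coeff 0) + verschiebung (shift Y)) := by
                rw [shift_spec, shift_spec]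
          _ = (teichmuller p (X.coeff 0) + teichmuller p (Y.coeff 0))
              + (verschiebung (shift X) + verschiebung (shift Y)) := by ring
          _ = (teichmuller p (X.coeff 0 + Y.coeff 0)
              + verschiebung (shift (teichmuller p (X.coeff 0) + teichmuller p (Y.coeff 0))))
              + (verschiebung (shift X) + verschiebung (shift Y)) := by rw [← hT]
          _ = teichmuller p (X.coeff 0 + Y.coeff 0)
              + verschiebung ((shift (teichmuller p (X.coeff 0) + teichmuller p (Y.coeff 0))
                + shift X) + shift Y) := by
                rw [map_add verschiebung (shift (teichmuller p (X.coeff 0)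
                    + teichmuller p (Y.coeff 0)) + shift X) (shift Y),
                  map_add verschiebung (shift (teichmuller p (X.coeff 0)
                    + teichmuller p (Y.coeff 0))) (shift X)]
                ring
      rw [hdecomp, cons_coeff_succ]
      have hscale : ∀ jj : ℕ, (p : ℝ) ^ jj * (p * cc) = (p : ℝ) ^ (jj + 1) * cc := by
        intro jj; rw [pow_succ]; ring
      have hu : ∀ jj, jj < m → red ((p : ℝ) ^ jj * (p * cc))
          (v ((shift (teichmuller p (X.coeff 0) + teichmuller p (Y.coeff 0))).coeff jj)) := by
        intro jj hjj
        rw [hscale jj]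
        have hsh : (shift (teichmuller p (X.coeff 0) + teichmuller p (Y.coeff 0))).coeff jj
            = (teichmuller p (X.coeff 0) + teichmuller p (Y.coeff 0)).coeff (jj + 1) := by
          simp [shift, WittVector.coeff_mk]
        rw [hsh]
        exact red_teichadd hred hv0 hvmul hvadd hvnonneg (jj + 1) h0X h0Y
      have hsX : ∀ jj, jj < m → red ((p : ℝ) ^ jj * (p * cc)) (v ((shift X).coeff jj)) := by
        intro jj hjj
        rw [hscale jj]
        have := hX (jj + 1) (by omega)
        simpa [shift, WittVector.coeff_mk] using this
      have hsY : ∀ jj, jj < m → red ((p : ℝ) ^ jj * (p * cc)) (v ((shift Y).coeff jj)) := by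
        intro jj hjj
        rw [hscale jj]
        have := hY (jj + 1) (by omega)
        simpa [shift, WittVector.coeff_mk] using this
      have hcomb := ih (p * cc) _ _ (ih (p * cc) _ _ hu hsX) hsY j (by omega)
      rw [hscale j] at hcomb
      exact hcomb

lemma red_sumclosed {ι : Type*} (s : Finset ι) (F : ι → WittVector p R) (cc : ℝ)
    (h : ∀ i ∈ s, ∀ j : ℕ, red ((p : ℝ) ^ j * cc) (v ((F i).coeff j))) :
    ∀ j : ℕ, red ((p : ℝ) ^ j * cc) (v ((∑ i ∈ s, F i).coeff j)) := by
  classical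
  induction s using Finset.cons_induction with
  | empty =>
    intro j
    rw [Finset.sum_empty, WittVector.zero_coeff, hv0]
    exact hred.top _
  | cons a s ha ih =>
    intro j
    rw [Finset.sum_cons]
    exact red_addclosed hred hv0 hvmul hvadd hvnonneg (j + 1) cc _ _
      (fun jj _ => h a (Finset.mem_cons_self a s) jj)
      (fun jj _ => ih (fun i hi => h i (Finset.mem_cons_of_mem hi)) jj)
      j (by omega)

end Red

section CharPPerfect

variable {p : ℕ} [hp : Fact p.Prime] {R : Type*} [CommRing R]

lemma sumV_coeff : ∀ (N : ℕ) (g : ℕ → R) (j : ℕ),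
    (∑ i ∈ Finset.range N, verschiebung^[i] (teichmuller p (g i))).coeff j
      = if j < N then g j else 0 := by
  intro N
  induction N with
  | zero => intro g j; simp
  | succ N ih =>
    intro g j
    have hstep : (∑ i ∈ Finset.range (N + 1), verschiebung^[i] (teichmuller p (g i)))
        = teichmuller p (g 0)
          + verschiebung (∑ i ∈ Finset.range N, verschiebung^[i] (teichmuller p (g (i + 1)))) := by
      rw [Finset.sum_range_succ']
      have h1 : ∀ i ∈ Finset.range N, verschiebung^[i + 1] (teichmuller p (g (i + 1)))
          = verschiebung (verschiebung^[i] (teichmuller p (g (i + 1)))) := fun i _ =>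
        Function.iterate_succ_apply' _ _ _
      rw [Finset.sum_congr rfl h1, ← map_sum verschiebung _ (Finset.range N),
        Function.iterate_zero_apply, add_comm]
    rw [hstep]
    cases j with
    | zero => rw [cons_coeff_zero]; simp
    | succ j =>
      rw [cons_coeff_succ, ih (fun k => g (k + 1)) j]
      by_cases h : j < N <;> simp [h, Nat.succ_lt_succ_iff]

variable [CharP R p]

lemma frob_iter_teich (w : R) (i : ℕ) :
    frobenius^[i] (teichmuller p w) = teichmuller p (w ^ p ^ i) := by
  induction i with
  | zero => simp
  | succ i ih =>
    rw [Function.iterate_succ_apply', ih]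
    ext n
    rw [coeff_frobenius_charP]
    cases n with
    | zero =>
      rw [teichmuller_coeff_zero, teichmuller_coeff_zero, ← pow_mul, pow_succ]
    | succ k =>
      rw [teichmuller_coeff_pos p _ _ (Nat.succ_pos k), teichmuller_coeff_pos p _ _ (Nat.succ_pos k),
        zero_pow hp.out.ne_zero]

lemma iterate_VF (i : ℕ) : ∀ x : WittVector p R,
    verschiebung^[i] (frobenius^[i] x) = x * (p : WittVector p R) ^ i := by
  induction i with
  | zero => intro x; simp
  | succ i ih =>
    intro x
    have hfp : frobenius (x * (p : WittVector p R) ^ i)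
        = frobenius x * (p : WittVector p R) ^ i := by
      rw [map_mul, map_pow, map_natCast]
    calc verschiebung^[i + 1] (frobenius^[i + 1] x)
        = verschiebung (verschiebung^[i] (frobenius^[i] (frobenius x))) := by
          rw [Function.iterate_succ_apply' (f := verschiebung),
            Function.iterate_succ_apply (f := frobenius)]
      _ = verschiebung (frobenius (x * (p : WittVector p R) ^ i)) := by
          rw [ih (frobenius x), hfp]
      _ = (x * (p : WittVector p R) ^ i) * p := verschiebung_frobenius _
      _ = x * (p : WittVector p R) ^ (i + 1) := by rw [pow_succ, mul_assoc]

variable [PerfectRing R p]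

lemma pth_root_pow (i : ℕ) : ∀ b : R, ((frobeniusEquiv R p).symm)^[i] b ^ p ^ i = b := by
  induction i with
  | zero => intro b; simp
  | succ i ih =>
    intro b
    rw [Function.iterate_succ_apply, pow_succ, pow_mul, ih ((frobeniusEquiv R p).symm b),
      ← frobenius_def, frobenius_apply_frobeniusEquiv_symm]

lemma iterV_teich_eq (a : R) (i : ℕ) :
    verschiebung^[i] (teichmuller p a)
      = teichmuller p (((frobeniusEquiv R p).symm)^[i] a) * (p : WittVector p R) ^ i := by
  conv_lhs => rw [← pth_root_pow (p := p) i a]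
  rw [← frob_iter_teich, iterate_VF]

end CharPPerfect

section Main

variable {p : ℕ} [hp : Fact p.Prime] {R : Type*} [CommRing R] [CharP R p] [PerfectRing R p]
variable {v : R → WithTop ℝ} {red : ℝ → WithTop ℝ → Prop}

theorem main_red (hred : RedAx red)
    (hv0 : v 0 = ⊤) (hvmul : ∀ x y : R, v (x * y) = v x + v y)
    (hvadd : ∀ x y : R, min (v x) (v y) ≤ v (x + y)) (hvnonneg : ∀ x : R, 0 ≤ v x)
    (c : ℝ) (n : ℕ) (x : TruncatedWittVector p n R) :
    x ∈ Ideal.span {z : TruncatedWittVector p n R |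
        ∃ y : R, red c (v y) ∧ z = WittVector.truncate n (teichmuller p y)} ↔
      ∀ i : Fin n, red ((p : ℝ) ^ (i : ℕ) * c) (v (x.coeff i)) := by
  constructor
  · intro hx
    obtain ⟨N, f, g, hsum⟩ := Submodule.mem_span_set'.mp hx
    have hFi : ∀ i : Fin N, ∃ Z : WittVector p R, WittVector.truncate n Z = f i := fun i =>
      WittVector.truncate_surjective p n R (f i)
    choose F hF using hFi
    have hgy : ∀ i : Fin N, ∃ y : R, red c (v y)
        ∧ (g i : TruncatedWittVector p n R) = WittVector.truncate n (teichmuller p y) :=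
      fun i => (g i).2
    choose y hy1 hy2 using hgy
    have hxeq : x = WittVector.truncate n (∑ i : Fin N, F i * teichmuller p (y i)) := by
      rw [map_sum, ← hsum]
      refine Finset.sum_congr rfl fun i _ => ?_
      rw [map_mul, hF i, ← hy2 i, smul_eq_mul]
    intro i
    have hco : x.coeff i = (∑ k : Fin N, F k * teichmuller p (y k)).coeff (i : ℕ) := by
      rw [hxeq, WittVector.coeff_truncate]
    rw [hco]
    refine red_sumclosed hred hv0 hvmul hvadd hvnonneg Finset.univ _ c (fun k _ j => ?_) (i : ℕ)
    rw [mul_comm (F k) (teichmuller p (y k)), teich_mul_coeff, hvmul]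
    refine hred.mono _ _ _ (red_pow hred hvmul j (hy1 k)) ?_
    exact le_add_of_nonneg_right (hvnonneg _)
  · intro hcoeff
    set a : ℕ → R := fun i => if h : i < n then x.coeff ⟨i, h⟩ else 0 with ha
    have hZ : x = WittVector.truncate n
        (∑ i ∈ Finset.range n, verschiebung^[i] (teichmuller p (a i))) := by
      apply TruncatedWittVector.ext
      intro i
      rw [WittVector.coeff_truncate, sumV_coeff]
      simp [ha, i.isLt]
    rw [hZ, show (∑ i ∈ Finset.range n, verschiebung^[i] (teichmuller p (a i)))
        = ∑ i ∈ Finset.range n,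
            teichmuller p (((frobeniusEquiv R p).symm)^[i] (a i)) * (p : WittVector p R) ^ i from
      Finset.sum_congr rfl fun i _ => iterV_teich_eq (a i) i, map_sum]
    refine Ideal.sum_mem _ fun i hi => ?_
    rw [map_mul]
    refine Ideal.mul_mem_right _ _ (Ideal.subset_span ?_)
    refine ⟨((frobeniusEquiv R p).symm)^[i] (a i), ?_, rfl⟩
    refine red_root (p := p) hred hvmul i ?_
    rw [pth_root_pow]
    by_cases hin : i < n
    · have h1 := hcoeff ⟨i, hin⟩
      have h2 : a i = x.coeff ⟨i, hin⟩ := by simp [ha, hin]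
      rw [h2]
      exact h1
    · have h2 : a i = 0 := by simp [ha, hin]
      rw [h2, hv0]
      exact hred.top _

end Main

end CLaux



/-- The ideal `[𝔞_R^{≥c}]` of `W_n(R)`: generated by Teichmüller representatives of
elements of valuation `≥ c`. -/
noncomputable def idealGE (p n : ℕ) [hp : Fact p.Prime] {R : Type*} [CommRing R]
    (v : R → WithTop ℝ) (c : ℝ) : Ideal (TruncatedWittVector p n R) :=
  Ideal.span {z | ∃ y : R, (c : WithTop ℝ) ≤ v y ∧ z = truncTeichmuller p n y}

theorem mem_idealGT_iff_and_mem_idealGE_iff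
    (p : ℕ) [hp : Fact p.Prime] {R : Type*} [CommRing R] [CharP R p] [PerfectRing R p]
    (v : R → WithTop ℝ)
    (hv0 : v 0 = ⊤)
    (hvmul : ∀ x y : R, v (x * y) = v x + v y)
    (hvadd : ∀ x y : R, min (v x) (v y) ≤ v (x + y))
    (hvnonneg : ∀ x : R, 0 ≤ v x)
    (c : ℝ) (hc : 0 ≤ c) (n : ℕ) (hn : 1 ≤ n) (x : TruncatedWittVector p n R) :
    (x ∈ idealGT p n v c ↔ ∀ i : Fin n, ((p : ℝ) ^ (i : ℕ) * c : ℝ) < v (x.coeff i)) ∧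
    (x ∈ idealGE p n v c ↔ ∀ i : Fin n, (((p : ℝ) ^ (i : ℕ) * c : ℝ) : WithTop ℝ) ≤ v (x.coeff i)) := by
  constructor
  · exact CLaux.main_red CLaux.redAx_lt hv0 hvmul hvadd hvnonneg c n x
  · exact CLaux.main_red CLaux.redAx_le hv0 hvmul hvadd hvnonneg c n x
end

section
/- Let E(u) ∈ W[u] be a monic polynomial of degree e ≥ 1 all of whose coefficients other than the leading one lie in pW (for instance an Eisenstein polynomial). Then for all integers n, r ≥ 1, u^N = 0 in W_n[u]/E(u)^r for N = e·p^{n−1}·⌈r/p^{n−1}⌉, where ⌈x⌉ denotes the smallest integer not less than x; i.e. u^{e·p^{n−1}·⌈r/p^{n−1}⌉} lies in the ideal (p^n, E(u)^r) of W[u]. -/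
/-!
Statement 5 (Lemma 2.12 of Caruso–Liu): if `E(u) ∈ W[u]` is monic of degree `e ≥ 1`
with all non-leading coefficients divisible by `p`, then `u^N = 0` in `W_n[u]/E(u)^r`
for `N = e·p^{n−1}·⌈r/p^{n−1}⌉`.
-/

theorem X_pow_mem_span_ceil
    (p : ℕ) [hp : Fact p.Prime] (k : Type*) [Field k] [CharP k p] [PerfectRing k p]
    (e : ℕ) (he : 1 ≤ e)
    (E : Polynomial (WittVector p k)) (hmonic : E.Monic) (hdeg : E.natDegree = e)
    (hcoeff : ∀ i < e, ∃ a : WittVector p k, E.coeff i = (p : WittVector p k) * a)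
    (n r : ℕ) (hn : 1 ≤ n) (hr : 1 ≤ r) :
    (Polynomial.X : Polynomial (WittVector p k)) ^
        (e * p ^ (n - 1) * ⌈(r : ℚ) / (p : ℚ) ^ (n - 1)⌉₊) ∈
      Ideal.span {((p : Polynomial (WittVector p k)) ^ n), E ^ r} := by
  set q := p ^ (n - 1) with hq
  set c := ⌈(r : ℚ) / (p : ℚ) ^ (n - 1)⌉₊ with hc
  have hp0 : (0 : ℚ) < (p : ℚ) := by exact_mod_cast hp.out.pos
  have hppos : (0 : ℚ) < (p : ℚ) ^ (n - 1) := by positivity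
  -- r ≤ q * c
  have hrle : r ≤ q * c := by
    have h1 : (r : ℚ) / (p : ℚ) ^ (n - 1) ≤ (c : ℚ) := Nat.le_ceil _
    have h2 : (r : ℚ) ≤ (c : ℚ) * (p : ℚ) ^ (n - 1) := by
      rw [div_le_iff₀ hppos] at h1; exact h1
    have : (r : ℚ) ≤ ((q * c : ℕ) : ℚ) := by
      push_cast [hq]; linarith
    exact_mod_cast this
  -- p ∣ E - X^e
  have hpc : ((p : Polynomial (WittVector p k))) ∣ (E - Polynomial.X ^ e) := by
    have : (Polynomial.C ((p : WittVector p k))) ∣ (E - Polynomial.X ^ e) := by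
      rw [Polynomial.C_dvd_iff_dvd_coeff]
      intro i
      rw [Polynomial.coeff_sub, Polynomial.coeff_X_pow]
      rcases lt_trichotomy i e with h | h | h
      · obtain ⟨a, ha⟩ := hcoeff i h
        rw [if_neg h.ne, sub_zero]
        exact ⟨a, ha⟩
      · subst h
        have h1 : E.coeff i = 1 := hdeg ▸ hmonic.coeff_natDegree
        simp [h1]
      · have h1 : E.coeff i = 0 := by
          apply Polynomial.coeff_eq_zero_of_natDegree_lt
          rw [hdeg]; exact h
        simp [h1, if_neg h.ne']
    simpa using this
  have key : ((p : Polynomial (WittVector p k))) ^ n ∣ E ^ q - (Polynomial.X ^ e) ^ q := by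
    have := dvd_sub_pow_of_dvd_sub hpc (n - 1)
    rwa [Nat.sub_add_cancel hn] at this
  have key2 : ((p : Polynomial (WittVector p k))) ^ n ∣
      (E ^ q) ^ c - ((Polynomial.X ^ e) ^ q) ^ c :=
    key.trans (sub_dvd_pow_sub_pow _ _ c)
  obtain ⟨z, hz⟩ := key2
  rw [Ideal.mem_span_pair]
  refine ⟨-z, E ^ (q * c - r), ?_⟩
  have hE : E ^ (q * c - r) * E ^ r = (E ^ q) ^ c := by
    rw [← pow_add, Nat.sub_add_cancel hrle, ← pow_mul]
  have hX : (Polynomial.X : Polynomial (WittVector p k)) ^ (e * q * c)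
      = ((Polynomial.X ^ e) ^ q) ^ c := by
    rw [← pow_mul, ← pow_mul, mul_assoc]
  rw [hX, hE]
  linear_combination hz
end

section
/- Let E(u) ∈ W[u] be an Eisenstein polynomial of degree e ≥ 1 (monic, all non-leading coefficients in pW, constant coefficient not in p²W); it is the minimal polynomial of a uniformizer of a totally ramified extension K of W[1/p] of degree e. Then there exists a constant c ∈ ℕ, depending only on E (equivalently only on K), such that for all integers n, r ≥ 1, u^N = 0 in W_n[u]/E(u)^r for N = en + c(r−1); i.e. u^{en + c(r−1)} lies in the ideal (p^n, E(u)^r) of W[u]. -/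
/-!
Statement 7 (Lemma 2.15 of Caruso–Liu): for an Eisenstein polynomial `E(u) ∈ W[u]` of
degree `e ≥ 1`, there is a constant `c ∈ ℕ` depending only on `E` such that for all
`n, r ≥ 1`, `u^{en + c(r−1)} = 0` in `W_n[u]/E(u)^r`.
-/

theorem exists_const_X_pow_mem_span
    (p : ℕ) [hp : Fact p.Prime] (k : Type*) [Field k] [CharP k p] [PerfectRing k p]
    (e : ℕ) (he : 1 ≤ e)
    (E : Polynomial (WittVector p k)) (hmonic : E.Monic) (hdeg : E.natDegree = e)
    (hcoeff : ∀ i < e, ∃ a : WittVector p k, E.coeff i = (p : WittVector p k) * a)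
    (heis : ¬ ∃ a : WittVector p k, E.coeff 0 = (p : WittVector p k) ^ 2 * a) :
    ∃ c : ℕ, ∀ n r : ℕ, 1 ≤ n → 1 ≤ r →
      (Polynomial.X : Polynomial (WittVector p k)) ^ (e * n + c * (r - 1)) ∈
        Ideal.span {((p : Polynomial (WittVector p k)) ^ n), E ^ r} := by
  classical
  -- `E - X^e` has all coefficients divisible by `p`, hence is divisible by `C p`.
  have hdvd : (Polynomial.C (p : WittVector p k)) ∣ (E - Polynomial.X ^ e) := by
    have hmem : E - Polynomial.X ^ e ∈
        Ideal.map Polynomial.C (Ideal.span {(p : WittVector p k)}) := by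
      rw [Ideal.mem_map_C_iff]
      intro i
      rcases lt_trichotomy i e with h | h | h
      · rw [Polynomial.coeff_sub, Polynomial.coeff_X_pow, if_neg (by omega)]
        obtain ⟨a, ha⟩ := hcoeff i h
        rw [ha, sub_zero, Ideal.mem_span_singleton]
        exact dvd_mul_right _ _
      · subst h
        rw [Polynomial.coeff_sub, Polynomial.coeff_X_pow, if_pos rfl]
        have h1 : E.coeff i = 1 := by
          have := hmonic.coeff_natDegree
          rwa [hdeg] at this
        rw [h1, sub_self]
        exact Ideal.zero_mem _
      · rw [Polynomial.coeff_sub, Polynomial.coeff_X_pow, if_neg (by omega),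
          Polynomial.coeff_eq_zero_of_natDegree_lt (by rw [hdeg]; exact h), sub_zero]
        exact Ideal.zero_mem _
    rw [Ideal.map_span, Set.image_singleton, Ideal.mem_span_singleton] at hmem
    exact hmem
  obtain ⟨F, hF⟩ := hdvd
  have hXe : (Polynomial.X : Polynomial (WittVector p k)) ^ e
      = E + (-(Polynomial.C (p : WittVector p k) * F)) := by
    have := hF
    ring_nf
    linear_combination -hF
  refine ⟨e, fun n r hn hr => ?_⟩
  have hexp : e * n + e * (r - 1) = e * (n + r - 1) := by
    have : n + r - 1 = n + (r - 1) := by omega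
    rw [this, Nat.mul_add]
  rw [hexp, pow_mul, hXe, add_pow]
  apply Ideal.sum_mem
  intro j hj
  rcases le_or_gt r j with hrj | hrj
  · -- term divisible by `E ^ r`
    have hEr : E ^ j ∈ Ideal.span {((p : Polynomial (WittVector p k)) ^ n), E ^ r} := by
      have : E ^ j = E ^ r * E ^ (j - r) := by
        rw [← pow_add, Nat.add_sub_cancel' hrj]
      rw [this]
      exact Ideal.mul_mem_right _ _
        (Ideal.subset_span (Set.mem_insert_of_mem _ rfl))
    exact Ideal.mul_mem_right _ _ (Ideal.mul_mem_right _ _ hEr)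
  · -- `j ≤ r - 1`, so `n + r - 1 - j ≥ n`, term divisible by `p ^ n`
    have hjn : n ≤ n + r - 1 - j := by omega
    have hdvd2 : ((p : Polynomial (WittVector p k)) ^ n) ∣
        (-(Polynomial.C (p : WittVector p k) * F)) ^ (n + r - 1 - j) := by
      have h1 : (p : Polynomial (WittVector p k)) ∣
          (-(Polynomial.C (p : WittVector p k) * F)) := by
        rw [Polynomial.C_eq_natCast]
        exact (dvd_mul_right _ _).neg_right
      exact dvd_trans (pow_dvd_pow _ hjn) (pow_dvd_pow_of_dvd h1 _)
    obtain ⟨G, hG⟩ := hdvd2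
    rw [hG]
    have hp : ((p : Polynomial (WittVector p k)) ^ n) ∈
        Ideal.span {((p : Polynomial (WittVector p k)) ^ n), E ^ r} :=
      Ideal.subset_span (Set.mem_insert _ _)
    exact Ideal.mul_mem_right _ _ (Ideal.mul_mem_left _ _
      (Ideal.mul_mem_right _ _ hp))
end

section
/- Let c > 0 be a real number and s ≥ 0 an integer such that p^s·v(p) > c. Then θ_s induces a ring isomorphism R/{x ∈ R : v_R(x) > c} ≅ O/{x ∈ O : v(x) > c/p^s}. Precisely: since v(p) > c/p^s, the ideal 𝔞 = {x ∈ O : v(x) > c/p^s} of O contains p, so the projection O/p → O/𝔞 is defined; the composite R →(θ_s) O/p → O/𝔞 is a surjective ring homomorphism whose kernel is exactly {x ∈ R : v_R(x) > c}. -/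
/-!
Statement 8 (Lemma 2.8 of Caruso–Liu).  `K` is an algebraically closed field with an
additive valuation `v` with `0 < v p < ∞`, `O` its valuation ring, `R = lim_{x↦x^p} O/p`
the tilt with its valuation `v_R`, and `θ_s : R → O/p` the `s`-th projection.  If
`p^s·v(p) > c > 0` then `θ_s` induces a ring isomorphism
`R/{v_R > c} ≅ O/{v > c/p^s}`: the composite `R → O/p → O/𝔞` (with
`𝔞 = {x ∈ O : v x > c/p^s} ∋ p`) is a surjective ring homomorphism with kernel
`{x ∈ R : v_R x > c}`.
-/

noncomputable section

/-- The axioms for an additive valuation on a field `K`, with `0 < v p < ∞`. -/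
structure ValAx (p : ℕ) (K : Type*) [Field K] (v : K → WithTop ℝ) : Prop where
  map_mul : ∀ x y : K, v (x * y) = v x + v y
  min_le_map_add : ∀ x y : K, min (v x) (v y) ≤ v (x + y)
  top_iff : ∀ x : K, v x = ⊤ ↔ x = 0
  vp_pos : 0 < v (p : K)
  vp_ne_top : v (p : K) ≠ ⊤

namespace Tilt

variable {p : ℕ} {K : Type*} [Field K] {v : K → WithTop ℝ}

theorem v_one_eq_zero (hv : ValAx p K v) : v 1 = 0 := by
  have h : v 1 = v 1 + v 1 := by
    conv_lhs => rw [show (1 : K) = 1 * 1 by ring]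
    exact hv.map_mul 1 1
  have hne : v 1 ≠ ⊤ := fun h' => one_ne_zero ((hv.top_iff 1).1 h')
  obtain ⟨r, hr⟩ := WithTop.ne_top_iff_exists.mp hne
  rw [← hr] at h
  rw [← hr]
  norm_cast at h ⊢
  linarith

theorem v_neg (hv : ValAx p K v) (x : K) : v (-x) = v x := by
  have hm1 : v (-1 : K) = 0 := by
    have h : v (-1 : K) + v (-1 : K) = 0 := by
      rw [← hv.map_mul]; norm_num [v_one_eq_zero hv]
    rcases eq_or_ne (v (-1 : K)) ⊤ with h' | h'
    · rw [h'] at h; simp at h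
    · obtain ⟨r, hr⟩ := WithTop.ne_top_iff_exists.mp h'
      rw [← hr] at h ⊢; norm_cast at h ⊢; linarith
  calc v (-x) = v ((-1) * x) := by ring_nf
  _ = v (-1 : K) + v x := hv.map_mul _ _
  _ = v x := by rw [hm1, zero_add]

/-- The valuation ring `O = {x ∈ K : v x ≥ 0}`. -/
def O (p : ℕ) (v : K → WithTop ℝ) (hv : ValAx p K v) : Subring K where
  carrier := {x | 0 ≤ v x}
  one_mem' := le_of_eq (v_one_eq_zero hv).symm
  mul_mem' := fun {x y} hx hy => by
    simpa only [Set.mem_setOf_eq, hv.map_mul] using add_nonneg hx hy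
  zero_mem' := by simp only [Set.mem_setOf_eq, (hv.top_iff 0).2 rfl]; exact le_top
  add_mem' := fun {x y} hx hy => le_trans (le_min hx hy) (hv.min_le_map_add x y)
  neg_mem' := fun {x} hx => by simpa only [Set.mem_setOf_eq, v_neg hv] using hx

/-- The ideal `pO` of `O`. -/
def pIdeal (p : ℕ) (v : K → WithTop ℝ) (hv : ValAx p K v) : Ideal (O p v hv) :=
  Ideal.span {(p : O p v hv)}

theorem pIdeal_ne_top (hv : ValAx p K v) : pIdeal p v hv ≠ ⊤ := by
  intro h
  rw [Ideal.eq_top_iff_one, pIdeal, Ideal.mem_span_singleton] at h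
  obtain ⟨a, ha⟩ := h
  have ha' : (1 : K) = (p : K) * (a : K) := by
    have := congrArg (fun z : O p v hv => (z : K)) ha
    push_cast at this
    exact this
  have h0 : (0 : WithTop ℝ) = v ((p : K) * (a : K)) := by
    rw [← ha', v_one_eq_zero hv]
  rw [hv.map_mul] at h0
  have : (0 : WithTop ℝ) < v (p : K) + v (a : K) :=
    lt_of_lt_of_le hv.vp_pos (le_add_of_nonneg_right a.2)
  rw [← h0] at this
  exact lt_irrefl _ this

theorem charP_quotient (hv : ValAx p K v) [Fact p.Prime] :
    CharP (O p v hv ⧸ pIdeal p v hv) p := by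
  haveI : Nontrivial (O p v hv ⧸ pIdeal p v hv) :=
    Ideal.Quotient.nontrivial_iff.mpr (pIdeal_ne_top hv)
  refine (CharP.charP_iff_prime_eq_zero Fact.out).2 ?_
  rw [← map_natCast (Ideal.Quotient.mk (pIdeal p v hv))]
  exact Ideal.Quotient.eq_zero_iff_mem.2 (Ideal.mem_span_singleton_self _)

/-- The tilt `R = lim_{x ↦ x^p} O/p`, as a subring of the product ring
`ℕ → O/p`: sequences `(x⁽⁰⁾, x⁽¹⁾, …)` with `(x⁽ˢ⁺¹⁾)^p = x⁽ˢ⁾`. -/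
def tilt (p : ℕ) [Fact p.Prime] (v : K → WithTop ℝ) (hv : ValAx p K v) :
    Subring (ℕ → (O p v hv ⧸ pIdeal p v hv)) where
  carrier := {f | ∀ s : ℕ, f (s + 1) ^ p = f s}
  one_mem' := fun s => one_pow p
  mul_mem' := fun {f g} hf hg s => by
    simp only [Pi.mul_apply, mul_pow, hf s, hg s]
  zero_mem' := fun s => zero_pow (Fact.out (p := p.Prime)).ne_zero
  add_mem' := fun {f g} hf hg s => by
    haveI := charP_quotient hv
    simp only [Pi.add_apply, add_pow_char, hf s, hg s]
  neg_mem' := fun {f} hf s => by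
    haveI := charP_quotient hv
    rw [Pi.neg_apply, Pi.neg_apply, show -f (s + 1) = -1 * f (s + 1) by ring, mul_pow,
      neg_one_pow_char, hf s]
    ring

variable (p) [Fact p.Prime] (v)

/-- The `s`-th projection `θ_s : R → O/p`, `x ↦ x⁽ˢ⁾`. -/
def theta (hv : ValAx p K v) (s : ℕ) :
    tilt p v hv →+* (O p v hv ⧸ pIdeal p v hv) :=
  (Pi.evalRingHom _ s).comp (tilt p v hv).subtype

/-- The valuation `v_R` of the tilt: `v_R x = lim_s p^s · v(x̂⁽ˢ⁾)` where `x̂⁽ˢ⁾` is any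
lift of `x⁽ˢ⁾` to `O` (the sequence `p^s · min (v x̂⁽ˢ⁾) (v p)` is nondecreasing and
independent of the choice of lifts, and its limit is its supremum). -/
def vR (hv : ValAx p K v) (x : tilt p v hv) : WithTop ℝ :=
  ⨆ s : ℕ, ((((p : ℝ) ^ s : ℝ)) : WithTop ℝ) *
    min (v ((Function.surjInv Ideal.Quotient.mk_surjective (x.val s) : O p v hv) : K))
        (v (p : K))

/-- The ideal `𝔞 = {x ∈ O : v x > t}` of `O`. -/
def oIdealGT (hv : ValAx p K v) (t : ℝ) : Ideal (O p v hv) where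
  carrier := {x | (t : WithTop ℝ) < v ↑x}
  add_mem' := fun {x y} hx hy =>
    lt_of_lt_of_le (lt_min hx hy) (by push_cast; exact hv.min_le_map_add x y)
  zero_mem' := by
    show (t : WithTop ℝ) < v ((0 : O p v hv) : K)
    push_cast
    rw [(hv.top_iff 0).2 rfl]
    exact WithTop.coe_lt_top t
  smul_mem' := fun a x hx => by
    show (t : WithTop ℝ) < v ((a * x : O p v hv) : K)
    push_cast
    rw [hv.map_mul]
    exact lt_of_lt_of_le hx (le_add_of_nonneg_left a.2)

/-- Since `v p > c/p^s`, the ideal `𝔞 = {v > c/p^s}` contains `p`,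
so `pO ≤ 𝔞` and the projection `O/p → O/𝔞` is defined. -/
theorem pIdeal_le_oIdealGT (hv : ValAx p K v) (c : ℝ) (s : ℕ)
    (hs : (c : WithTop ℝ) < (((p : ℝ) ^ s : ℝ) : WithTop ℝ) * v (p : K)) :
    pIdeal p v hv ≤ oIdealGT p v hv (c / p ^ s) := by
  rw [pIdeal, Ideal.span_le, Set.singleton_subset_iff]
  show ((c / p ^ s : ℝ) : WithTop ℝ) < v ((p : O p v hv) : K)
  push_cast
  rcases eq_or_ne (v (p : K)) ⊤ with h | h
  · rw [h]; exact WithTop.coe_lt_top _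
  · obtain ⟨w, hw⟩ := WithTop.ne_top_iff_exists.mp h
    rw [← hw] at hs ⊢
    have hps : (0 : ℝ) < (p : ℝ) ^ s := by
      have : (0 : ℝ) < (p : ℝ) := by
        exact_mod_cast (Fact.out (p := p.Prime)).pos
      positivity
    have hs' : c < (p : ℝ) ^ s * w := by exact_mod_cast hs
    have hgoal : c / (p : ℝ) ^ s < w := (div_lt_iff₀ hps).2 (by linarith)
    exact_mod_cast hgoal

/-! ### Auxiliary lemmas -/

theorem v_sub_ge (hv : ValAx p K v) (a b : K) : min (v a) (v b) ≤ v (a - b) := by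
  have := hv.min_le_map_add a (-b)
  rwa [v_neg hv, ← sub_eq_add_neg] at this

theorem v_add_eq_left (hv : ValAx p K v) {a b : K} (h : v a < v b) : v (a + b) = v a := by
  have h1 : v a ≤ v (a + b) := by
    have := hv.min_le_map_add a b; rwa [min_eq_left h.le] at this
  rcases h1.lt_or_eq with h2 | h2
  · exfalso
    have h3 : min (v (a + b)) (v b) ≤ v a := by
      have := v_sub_ge p v hv (a + b) b; rwa [add_sub_cancel_right] at this
    exact absurd h3 (not_le.2 (lt_min h2 h))
  · exact h2.symm

theorem v_pow_coe (hv : ValAx p K v) {a : K} {r : ℝ} (h : v a = (r : WithTop ℝ)) (n : ℕ) :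
    v (a ^ n) = (((n : ℝ) * r : ℝ) : WithTop ℝ) := by
  induction n with
  | zero => simpa using v_one_eq_zero hv
  | succ n ih =>
    rw [pow_succ, hv.map_mul, ih, h, ← WithTop.coe_add]
    norm_cast
    push_cast
    ring

/-- The chosen lift to `O` of the `n`-th component of an element of the tilt. -/
def liftSeq (hv : ValAx p K v) (x : tilt p v hv) (n : ℕ) : O p v hv :=
  Function.surjInv Ideal.Quotient.mk_surjective (x.val n)

theorem mk_liftSeq (hv : ValAx p K v) (x : tilt p v hv) (n : ℕ) :
    Ideal.Quotient.mk (pIdeal p v hv) (liftSeq p v hv x n) = x.val n :=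
  Function.surjInv_eq _ _

/-- `v p` as a real number. -/
def wv (hv : ValAx p K v) : ℝ := (v (p : K)).untop hv.vp_ne_top

theorem coe_wv (hv : ValAx p K v) : ((wv p v hv : ℝ) : WithTop ℝ) = v (p : K) :=
  WithTop.coe_untop _ _

theorem wv_pos (hv : ValAx p K v) : 0 < wv p v hv := by
  have := hv.vp_pos
  rw [← coe_wv p v hv] at this
  exact_mod_cast this

/-- The truncated valuation `min (v x̂⁽ⁿ⁾) (v p)` as a real number. -/
def mSeq (hv : ValAx p K v) (x : tilt p v hv) (n : ℕ) : ℝ :=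
  (min (v ((liftSeq p v hv x n : O p v hv) : K)) (v (p : K))).untop
    (ne_top_of_le_ne_top hv.vp_ne_top (min_le_right _ _))

theorem coe_mSeq (hv : ValAx p K v) (x : tilt p v hv) (n : ℕ) :
    ((mSeq p v hv x n : ℝ) : WithTop ℝ)
      = min (v ((liftSeq p v hv x n : O p v hv) : K)) (v (p : K)) :=
  WithTop.coe_untop _ _

theorem mSeq_nonneg (hv : ValAx p K v) (x : tilt p v hv) (n : ℕ) :
    0 ≤ mSeq p v hv x n := by
  have h1 : (0 : WithTop ℝ) ≤ min (v ((liftSeq p v hv x n : O p v hv) : K)) (v (p : K)) :=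
    le_min (liftSeq p v hv x n).2 hv.vp_pos.le
  rw [← coe_mSeq p v hv x n] at h1
  exact_mod_cast h1

theorem mSeq_le_wv (hv : ValAx p K v) (x : tilt p v hv) (n : ℕ) :
    mSeq p v hv x n ≤ wv p v hv := by
  have h1 : min (v ((liftSeq p v hv x n : O p v hv) : K)) (v (p : K)) ≤ v (p : K) :=
    min_le_right _ _
  rw [← coe_mSeq p v hv x n, ← coe_wv p v hv] at h1
  exact_mod_cast h1

theorem mSeq_rel (hv : ValAx p K v) (x : tilt p v hv) (n : ℕ) :
    mSeq p v hv x n = min ((p : ℝ) * mSeq p v hv x (n + 1)) (wv p v hv) := by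
  have hp1 : (1 : ℝ) ≤ (p : ℝ) := by
    exact_mod_cast (Fact.out (p := p.Prime)).one_lt.le
  have hw := wv_pos p v hv
  set A : K := ((liftSeq p v hv x n : O p v hv) : K) with hA
  set B : K := ((liftSeq p v hv x (n + 1) : O p v hv) : K) with hB
  -- the difference `B^p - A` is divisible by `p` in `O`
  have hmem : (liftSeq p v hv x (n + 1)) ^ p - liftSeq p v hv x n ∈ pIdeal p v hv := by
    rw [← Ideal.Quotient.eq_zero_iff_mem, RingHom.map_sub, RingHom.map_pow, mk_liftSeq,
      mk_liftSeq, x.2 n, sub_self]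
  have hd : v (p : K) ≤ v (B ^ p - A) := by
    rw [pIdeal, Ideal.mem_span_singleton'] at hmem
    obtain ⟨u, hu⟩ := hmem
    have hu' : B ^ p - A = (u : K) * (p : K) := by
      have := congrArg (fun z : O p v hv => (z : K)) hu
      push_cast at this
      exact this.symm
    rw [hu', hv.map_mul, add_comm]
    exact le_add_of_nonneg_right u.2
  have hArep : A = B ^ p + (-(B ^ p - A)) := by ring
  -- value of `m (n+1)` as a coe
  have hmB : ((mSeq p v hv x (n + 1) : ℝ) : WithTop ℝ) = min (v B) (v (p : K)) :=
    coe_mSeq p v hv x (n + 1)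
  have hmA : ((mSeq p v hv x n : ℝ) : WithTop ℝ) = min (v A) (v (p : K)) :=
    coe_mSeq p v hv x n
  rcases eq_or_ne (v B) ⊤ with hBtop | hBtop
  · -- `B = 0`, so `A = -(B^p - A)` has valuation `≥ v p`
    have hB0 : B = 0 := (hv.top_iff B).1 hBtop
    have hA' : v (p : K) ≤ v A := by
      have : A = -(B ^ p - A) := by
        rw [hB0, zero_pow (Fact.out (p := p.Prime)).ne_zero]; ring
      rw [this, v_neg hv]
      exact hd
    have h1 : mSeq p v hv x n = wv p v hv := by
      have : ((mSeq p v hv x n : ℝ) : WithTop ℝ) = ((wv p v hv : ℝ) : WithTop ℝ) := by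
        rw [hmA, min_eq_right hA', coe_wv]
      exact_mod_cast this
    have h2 : mSeq p v hv x (n + 1) = wv p v hv := by
      have : ((mSeq p v hv x (n + 1) : ℝ) : WithTop ℝ) = ((wv p v hv : ℝ) : WithTop ℝ) := by
        rw [hmB, hB0, (hv.top_iff 0).2 rfl, min_eq_right, coe_wv]
        exact le_top
      exact_mod_cast this
    rw [h1, h2, min_eq_right]
    nlinarith
  · obtain ⟨b, hb⟩ := WithTop.ne_top_iff_exists.mp hBtop
    have hbnn : 0 ≤ b := by
      have : (0 : WithTop ℝ) ≤ v B := (liftSeq p v hv x (n + 1)).2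
      rw [← hb] at this
      exact_mod_cast this
    have hBp : v (B ^ p) = (((p : ℝ) * b : ℝ) : WithTop ℝ) := v_pow_coe p v hv hb.symm p
    have hmB' : mSeq p v hv x (n + 1) = min b (wv p v hv) := by
      have : ((mSeq p v hv x (n + 1) : ℝ) : WithTop ℝ) = ((min b (wv p v hv) : ℝ) : WithTop ℝ) := by
        rw [hmB, ← hb, ← coe_wv p v hv, WithTop.coe_min]
      exact_mod_cast this
    rcases lt_or_ge ((p : ℝ) * b) (wv p v hv) with hcase | hcase
    · -- `v (B^p) < v p ≤ v (B^p - A)`, so `v A = p·b`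
      have hvA : v A = (((p : ℝ) * b : ℝ) : WithTop ℝ) := by
        rw [hArep, ← hBp]
        refine v_add_eq_left p v hv ?_
        rw [v_neg hv, hBp]
        refine lt_of_lt_of_le ?_ hd
        rw [← coe_wv p v hv]
        exact_mod_cast hcase
      have h1 : mSeq p v hv x n = (p : ℝ) * b := by
        have : ((mSeq p v hv x n : ℝ) : WithTop ℝ) = (((p : ℝ) * b : ℝ) : WithTop ℝ) := by
          rw [hmA, hvA, min_eq_left]
          rw [← coe_wv p v hv]
          exact_mod_cast hcase.le
        exact_mod_cast this
      have hble : b ≤ wv p v hv := by nlinarith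
      rw [h1, hmB', min_eq_left hble, min_eq_left hcase.le]
    · -- `v A ≥ v p`
      have hvA : v (p : K) ≤ v A := by
        rw [hArep]
        refine le_trans (le_min ?_ ?_) (hv.min_le_map_add _ _)
        · rw [hBp, ← coe_wv p v hv]
          exact_mod_cast hcase
        · rw [v_neg hv]; exact hd
      have h1 : mSeq p v hv x n = wv p v hv := by
        have : ((mSeq p v hv x n : ℝ) : WithTop ℝ) = ((wv p v hv : ℝ) : WithTop ℝ) := by
          rw [hmA, min_eq_right hvA, coe_wv]
        exact_mod_cast this
      rw [h1, hmB', min_eq_right]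
      rcases le_total b (wv p v hv) with hb' | hb'
      · rw [min_eq_left hb']; linarith
      · rw [min_eq_right hb']; nlinarith

theorem tSeq_mono (hv : ValAx p K v) (x : tilt p v hv) :
    Monotone (fun n => (p : ℝ) ^ n * mSeq p v hv x n) := by
  have hp0 : (0 : ℝ) < (p : ℝ) := by exact_mod_cast (Fact.out (p := p.Prime)).pos
  refine monotone_nat_of_le_succ fun n => ?_
  have h := mSeq_rel p v hv x n
  have h1 : mSeq p v hv x n ≤ (p : ℝ) * mSeq p v hv x (n + 1) := h ▸ min_le_left _ _
  calc (p : ℝ) ^ n * mSeq p v hv x n ≤ (p : ℝ) ^ n * ((p : ℝ) * mSeq p v hv x (n + 1)) := by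
        have : (0 : ℝ) ≤ (p : ℝ) ^ n := by positivity
        nlinarith
    _ = (p : ℝ) ^ (n + 1) * mSeq p v hv x (n + 1) := by ring
theorem tSeq_step (hv : ValAx p K v) (x : tilt p v hv) (n : ℕ) :
    min ((p : ℝ) ^ (n + 1) * mSeq p v hv x (n + 1)) ((p : ℝ) ^ n * wv p v hv)
      ≤ (p : ℝ) ^ n * mSeq p v hv x n := by
  have h := mSeq_rel p v hv x n
  rcases le_total ((p : ℝ) * mSeq p v hv x (n + 1)) (wv p v hv) with hc | hc
  · rw [h, min_eq_left hc]
    refine le_trans (min_le_left _ _) (le_of_eq ?_); ring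
  · rw [h, min_eq_right hc]
    exact min_le_right _ _

theorem tSeq_key (hv : ValAx p K v) (x : tilt p v hv) (s : ℕ) :
    ∀ n, s ≤ n →
      min ((p : ℝ) ^ n * mSeq p v hv x n) ((p : ℝ) ^ s * wv p v hv)
        ≤ (p : ℝ) ^ s * mSeq p v hv x s := by
  have hp1 : (1 : ℝ) ≤ (p : ℝ) := by
    exact_mod_cast (Fact.out (p := p.Prime)).one_lt.le
  intro n
  induction n with
  | zero =>
    intro hn
    obtain rfl : s = 0 := Nat.le_zero.mp hn
    exact min_le_left _ _
  | succ n ih =>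
    intro hn
    rcases Nat.lt_or_ge n s with h' | h'
    · obtain rfl : s = n + 1 := le_antisymm hn h'
      exact min_le_left _ _
    · have hws : (p : ℝ) ^ s * wv p v hv ≤ (p : ℝ) ^ n * wv p v hv := by
        have := wv_pos p v hv
        have hpow : (p : ℝ) ^ s ≤ (p : ℝ) ^ n := pow_le_pow_right₀ hp1 h'
        nlinarith
      calc min ((p : ℝ) ^ (n + 1) * mSeq p v hv x (n + 1)) ((p : ℝ) ^ s * wv p v hv)
          ≤ min (min ((p : ℝ) ^ (n + 1) * mSeq p v hv x (n + 1)) ((p : ℝ) ^ n * wv p v hv))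
              ((p : ℝ) ^ s * wv p v hv) :=
            le_min (le_min (min_le_left _ _) (le_trans (min_le_right _ _) hws))
              (min_le_right _ _)
        _ ≤ min ((p : ℝ) ^ n * mSeq p v hv x n) ((p : ℝ) ^ s * wv p v hv) :=
            min_le_min (tSeq_step p v hv x n) le_rfl
        _ ≤ (p : ℝ) ^ s * mSeq p v hv x s := ih h'

theorem vR_eq (hv : ValAx p K v) (x : tilt p v hv) :
    vR p v hv x = ⨆ n : ℕ, (((p : ℝ) ^ n * mSeq p v hv x n : ℝ) : WithTop ℝ) := by
  unfold vR
  congr 1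
  funext n
  rw [WithTop.coe_mul, coe_mSeq]
  rfl

theorem lt_vR_iff (hv : ValAx p K v) (x : tilt p v hv) (c : ℝ) :
    (c : WithTop ℝ) < vR p v hv x ↔ ∃ n, c < (p : ℝ) ^ n * mSeq p v hv x n := by
  have hlub : IsLUB (Set.range fun n : ℕ =>
      (((p : ℝ) ^ n * mSeq p v hv x n : ℝ) : WithTop ℝ)) (vR p v hv x) := by
    rw [vR_eq]
    exact WithTop.isLUB_sSup' (Set.range_nonempty _)
  constructor
  · intro h
    by_contra hn
    push_neg at hn
    have : vR p v hv x ≤ (c : WithTop ℝ) := by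
      refine hlub.2 ?_
      rintro _ ⟨n, rfl⟩
      exact WithTop.coe_le_coe.2 (hn n)
    exact absurd h (not_lt.2 this)
  · rintro ⟨n, hn⟩
    exact lt_of_lt_of_le (WithTop.coe_lt_coe.2 hn) (hlub.1 ⟨n, rfl⟩)

/-- For `p^s · v(p) > c`, the composite
`R → O/p → O/𝔞` (`𝔞 = {x ∈ O : v x > c/p^s}`) is a surjective ring homomorphism
with kernel `{x ∈ R : v_R x > c}`; hence it induces a ring isomorphism
`R/{v_R > c} ≅ O/{v > c/p^s}`. -/
theorem theta_surjective_and_ker (K : Type*) [Field K] [IsAlgClosed K]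
    (p : ℕ) [Fact p.Prime] (v : K → WithTop ℝ) (hv : ValAx p K v)
    (c : ℝ) (hc : 0 < c) (s : ℕ)
    (hs : (c : WithTop ℝ) < (((p : ℝ) ^ s : ℝ) : WithTop ℝ) * v (p : K)) :
    Function.Surjective
      ((Ideal.Quotient.factor (pIdeal_le_oIdealGT p v hv c s hs)).comp
        (theta p v hv s)) ∧
    ∀ x : tilt p v hv,
      ((Ideal.Quotient.factor (pIdeal_le_oIdealGT p v hv c s hs)).comp
        (theta p v hv s)) x = 0 ↔ (c : WithTop ℝ) < vR p v hv x := by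
  have hp0 : (0 : ℝ) < (p : ℝ) := by exact_mod_cast (Fact.out (p := p.Prime)).pos
  have hppos : (0 : ℝ) < (p : ℝ) ^ s := by positivity
  have hcw : c < (p : ℝ) ^ s * wv p v hv := by
    have h := hs
    rw [← coe_wv p v hv, ← WithTop.coe_mul] at h
    exact_mod_cast h
  have hcdiv : c / (p : ℝ) ^ s < wv p v hv := (div_lt_iff₀ hppos).2 (by nlinarith)
  constructor
  · -- surjectivity
    intro y
    obtain ⟨a, rfl⟩ := Ideal.Quotient.mk_surjective y
    have hroot : ∀ b : O p v hv, ∃ r : O p v hv, r ^ p = b := by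
      intro b
      obtain ⟨r, hr⟩ := IsAlgClosed.exists_pow_nat_eq (b : K) (Fact.out (p := p.Prime)).pos
      have hvr : (0 : WithTop ℝ) ≤ v r := by
        by_contra hneg
        push_neg at hneg
        obtain ⟨t, ht⟩ := WithTop.ne_top_iff_exists.mp hneg.ne_top
        have hvb : v (r ^ p) = (((p : ℝ) * t : ℝ) : WithTop ℝ) := v_pow_coe p v hv ht.symm p
        have hb0 : (0 : WithTop ℝ) ≤ v (r ^ p) := by rw [hr]; exact b.2
        rw [hvb] at hb0
        have ht0 : t < 0 := by rw [← ht] at hneg; exact_mod_cast hneg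
        have hge : (0 : ℝ) ≤ (p : ℝ) * t := by exact_mod_cast hb0
        nlinarith
      exact ⟨⟨r, hvr⟩, Subtype.ext (by push_cast; exact hr)⟩
    set f : O p v hv → O p v hv := fun b => (hroot b).choose with hf
    have hfp : ∀ b, f b ^ p = b := fun b => (hroot b).choose_spec
    set bseq : ℕ → O p v hv := fun n => f^[n] a with hbseq
    have hbsucc : ∀ n, bseq (n + 1) ^ p = bseq n := by
      intro n
      show (f^[n + 1] a) ^ p = f^[n] a
      rw [Function.iterate_succ_apply']
      exact hfp _
    have hmem : ∀ n : ℕ,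
        (Ideal.Quotient.mk (pIdeal p v hv) (bseq ((n + 1) - s) ^ p ^ (s - (n + 1)))) ^ p
          = Ideal.Quotient.mk (pIdeal p v hv) (bseq (n - s) ^ p ^ (s - n)) := by
      intro n
      rw [← RingHom.map_pow]
      congr 1
      rcases le_or_gt s n with h | h
      · have h1 : n + 1 - s = (n - s) + 1 := by omega
        have h2 : s - (n + 1) = 0 := by omega
        have h3 : s - n = 0 := by omega
        rw [h1, h2, h3]
        simpa using hbsucc _
      · have h1 : n + 1 - s = 0 := by omega
        have h2 : n - s = 0 := by omega
        have h3 : s - n = (s - (n + 1)) + 1 := by omega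
        rw [h1, h2, h3, ← pow_mul, ← pow_succ]
    refine ⟨⟨fun n => Ideal.Quotient.mk (pIdeal p v hv) (bseq (n - s) ^ p ^ (s - n)),
      hmem⟩, ?_⟩
    rw [RingHom.comp_apply]
    have hth : theta p v hv s
        ⟨fun n => Ideal.Quotient.mk (pIdeal p v hv) (bseq (n - s) ^ p ^ (s - n)), hmem⟩
          = Ideal.Quotient.mk (pIdeal p v hv) a := by
      show Ideal.Quotient.mk (pIdeal p v hv) (bseq (s - s) ^ p ^ (s - s)) = _
      rw [Nat.sub_self, pow_zero, pow_one]
      rfl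
    rw [hth, Ideal.Quotient.factor_mk]
  · -- kernel
    intro x
    rw [lt_vR_iff p v hv x c]
    have hcomp : ((Ideal.Quotient.factor (pIdeal_le_oIdealGT p v hv c s hs)).comp
        (theta p v hv s)) x
          = Ideal.Quotient.mk (oIdealGT p v hv (c / p ^ s)) (liftSeq p v hv x s) := by
      rw [RingHom.comp_apply]
      have hth : theta p v hv s x = Ideal.Quotient.mk (pIdeal p v hv) (liftSeq p v hv x s) :=
        (mk_liftSeq p v hv x s).symm
      rw [hth, Ideal.Quotient.factor_mk]
    rw [hcomp, Ideal.Quotient.eq_zero_iff_mem]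
    show ((c / (p : ℝ) ^ s : ℝ) : WithTop ℝ) < v ((liftSeq p v hv x s : O p v hv) : K) ↔ _
    constructor
    · intro h
      refine ⟨s, ?_⟩
      have h1 : ((c / (p : ℝ) ^ s : ℝ) : WithTop ℝ) < ((mSeq p v hv x s : ℝ) : WithTop ℝ) := by
        rw [coe_mSeq]
        refine lt_min h ?_
        rw [← coe_wv p v hv]
        exact_mod_cast hcdiv
      have h2 : c / (p : ℝ) ^ s < mSeq p v hv x s := by exact_mod_cast h1
      have := (div_lt_iff₀ hppos).1 h2
      nlinarith
    · rintro ⟨n, hn⟩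
      have h1 : c < (p : ℝ) ^ (max n s) * mSeq p v hv x (max n s) :=
        lt_of_lt_of_le hn (tSeq_mono p v hv x (le_max_left n s))
      have h2 : c < (p : ℝ) ^ s * mSeq p v hv x s :=
        lt_of_lt_of_le (lt_min h1 hcw) (tSeq_key p v hv x s (max n s) (le_max_right n s))
      have h3 : c / (p : ℝ) ^ s < mSeq p v hv x s := (div_lt_iff₀ hppos).2 (by nlinarith)
      have h4 : ((c / (p : ℝ) ^ s : ℝ) : WithTop ℝ) < ((mSeq p v hv x s : ℝ) : WithTop ℝ) := by
        exact_mod_cast h3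
      exact lt_of_lt_of_le h4 (le_trans (le_of_eq (coe_mSeq p v hv x s)) (min_le_left _ _))

end Tilt
end
end

section
/- Let ζ ∈ O be a primitive p-th root of unity (ζ^p = 1, ζ ≠ 1), and assume v(ζ − 1) = v(p)/(p − 1) (which holds automatically in the ring of integers of an algebraic closure of a p-adic field). Let a ∈ O be nonzero. Then the components (x_0, x_1, x_2, …) of the Witt vector [ζ·a] − [a] ∈ W(O) satisfy v(x_i) = v(ζ − 1) + p^i·v(a) for every i ≥ 0. (This is the key computation in the proof of Proposition 2.10 of the paper, showing that G_s fixes the class of [π_{s'}] modulo [𝔞^{>c/p^{s'}}].) -/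
/-!
Statement 10 (key computation in the proof of Proposition 2.10 of Caruso–Liu):
if `ζ` is a primitive `p`-th root of unity with `v(ζ−1) = v(p)/(p−1)` and `a ≠ 0`,
then the components `x_i` of the Witt vector `[ζ·a] − [a] ∈ W(O)` satisfy
`v(x_i) = v(ζ−1) + p^i·v(a)` for all `i ≥ 0`.
-/

open WittVector Finset

theorem valuation_coeff_teichmuller_sub
    (p : ℕ) [hp : Fact p.Prime]
    {O : Type*} [CommRing O] [IsDomain O] [CharZero O]
    (v : O → WithTop ℝ)
    (hvmul : ∀ x y : O, v (x * y) = v x + v y)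
    (hvadd : ∀ x y : O, min (v x) (v y) ≤ v (x + y))
    (hvtop : ∀ x : O, v x = ⊤ ↔ x = 0)
    (hvnonneg : ∀ x : O, 0 ≤ v x)
    (wp : ℝ) (hwp : v (p : O) = (wp : ℝ)) (hwp0 : 0 < wp)
    (ζ : O) (hζp : ζ ^ p = 1) (hζ1 : ζ ≠ 1)
    (hζv : v (ζ - 1) = ((wp / (p - 1) : ℝ) : WithTop ℝ))
    (a : O) (ha : a ≠ 0) (va : ℝ) (hva : v a = (va : ℝ)) :
    ∀ i : ℕ,
      v ((WittVector.teichmuller p (ζ * a) - WittVector.teichmuller p a).coeff i) =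
        ((wp / (p - 1) + (p : ℝ) ^ i * va : ℝ) : WithTop ℝ) := by
  have hp2 : 2 ≤ p := hp.out.two_le
  have hp1R : (1 : ℝ) < (p : ℝ) := by exact_mod_cast hp2
  set e : ℝ := wp / ((p : ℝ) - 1) with he
  have hpm1 : (0 : ℝ) < (p : ℝ) - 1 := by linarith
  have he0 : 0 < e := div_pos hwp0 hpm1
  have hwpe : wp = ((p : ℝ) - 1) * e := by rw [he, mul_div_assoc']; exact (mul_div_cancel_left₀ wp hpm1.ne').symm
  -- v 1 = 0
  have hv1 : v 1 = 0 := by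
    have h := hvmul 1 1
    rw [mul_one] at h
    obtain ⟨r, hr⟩ := WithTop.ne_top_iff_exists.mp
      (fun ht => one_ne_zero ((hvtop (1 : O)).mp ht))
    rw [← hr] at h
    have hr0 : r = r + r := by exact_mod_cast h
    have : r = 0 := by linarith
    rw [← hr, this]; rfl
  -- v (-x) = v x
  have hvneg : ∀ x : O, v (-x) = v x := by
    have hm1 : v (-1 : O) = 0 := by
      have h := hvmul (-1 : O) (-1)
      rw [neg_mul_neg, one_mul, hv1] at h
      obtain ⟨r, hr⟩ := WithTop.ne_top_iff_exists.mp
        (fun ht => one_ne_zero (neg_eq_zero.mp ((hvtop (-1 : O)).mp ht)))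
      rw [← hr] at h
      have hr0 : (0 : ℝ) = r + r := by exact_mod_cast h
      have : r = 0 := by linarith
      rw [← hr, this]; rfl
    intro x
    rw [show -x = -1 * x by ring, hvmul, hm1, zero_add]
  -- v (x ^ m) = m * r
  have hpow : ∀ (x : O) (r : ℝ), v x = (r : ℝ) → ∀ m : ℕ,
      v (x ^ m) = (((m : ℝ) * r : ℝ) : WithTop ℝ) := by
    intro x r hx m
    induction m with
    | zero => simp [hv1]
    | succ k ihk =>
      rw [pow_succ, hvmul, ihk, hx, ← WithTop.coe_add]
      congr 1; push_cast; ring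
  -- ultrametric equality
  have hvadd_eq : ∀ x y : O, v x < v y → v (x + y) = v x := by
    intro x y hlt
    refine le_antisymm ?_ ?_
    · by_contra hc
      push_neg at hc
      have hxy : (x + y) + (-y) = x := by ring
      have h2 := hvadd (x + y) (-y)
      rw [hxy, hvneg] at h2
      exact absurd h2 (not_le.mpr (lt_min hc hlt))
    · have h := hvadd x y
      rwa [min_eq_left hlt.le] at h
  -- sums of high-valuation terms
  have hsum_gt : ∀ (s : Finset ℕ) (f : ℕ → O) (c : ℝ),
      (∀ i ∈ s, (c : WithTop ℝ) < v (f i)) → (c : WithTop ℝ) < v (∑ i ∈ s, f i) := by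
    intro s f c
    induction s using Finset.induction with
    | empty =>
      intro _
      rw [Finset.sum_empty, (hvtop 0).mpr rfl]
      exact WithTop.coe_lt_top c
    | insert _ _ hnotmem ih =>
      intro hmem
      rw [Finset.sum_insert hnotmem]
      exact lt_of_lt_of_le
        (lt_min (hmem _ (mem_insert_self _ _))
          (ih fun i hi => hmem i (mem_insert_of_mem hi)))
        (hvadd _ _)
  set x := teichmuller p (ζ * a) - teichmuller p a with hx
  have hzeta_pow : ∀ n : ℕ, 1 ≤ n → ζ ^ p ^ n = 1 := by
    intro n hn
    obtain ⟨m, rfl⟩ := Nat.exists_eq_add_of_le hn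
    rw [pow_add, pow_one, pow_mul, hζp, one_pow]
  have hghost : ∀ n : ℕ,
      ∑ i ∈ range (n + 1), (p : O) ^ i * x.coeff i ^ p ^ (n - i) = ghostComponent n x := by
    intro n
    rw [ghostComponent_apply, aeval_wittPolynomial]
  have hg : ∀ n : ℕ, ghostComponent n x = (ζ * a) ^ p ^ n - a ^ p ^ n := by
    intro n
    rw [hx, map_sub, ghostComponent_teichmuller, ghostComponent_teichmuller]
  have hgn : ∀ n : ℕ, 1 ≤ n →
      ∑ i ∈ range (n + 1), (p : O) ^ i * x.coeff i ^ p ^ (n - i) = 0 := by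
    intro n hn
    rw [hghost, hg, mul_pow, hzeta_pow n hn, one_mul, sub_self]
  have hg0 : x.coeff 0 = (ζ - 1) * a := by
    have h0 : ghostComponent 0 x = x.coeff 0 := by
      rw [ghostComponent_apply, aeval_wittPolynomial]; simp
    rw [← h0, hg 0, pow_zero, pow_one, pow_one]; ring
  suffices key : ∀ n : ℕ, v (x.coeff n) = ((e + (p : ℝ) ^ n * va : ℝ) : WithTop ℝ) by
    intro i; exact key i
  intro n
  induction n using Nat.strong_induction_on with
  | _ n ih =>
    rcases n with _ | m
    · rw [hg0, hvmul, hζv, hva, ← WithTop.coe_add]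
      norm_num
    · have hsum := hgn (m + 1) (Nat.succ_le_succ (Nat.zero_le m))
      rw [Finset.sum_range_succ, Nat.sub_self, pow_zero, pow_one] at hsum
      have h1 : (p : O) ^ (m + 1) * x.coeff (m + 1) =
          -∑ i ∈ range (m + 1), (p : O) ^ i * x.coeff i ^ p ^ (m + 1 - i) :=
        eq_neg_of_add_eq_zero_right hsum
      have hvpj : ∀ j : ℕ, v ((p : O) ^ j) = (((j : ℝ) * wp : ℝ) : WithTop ℝ) :=
        fun j => hpow (p : O) wp hwp j
      have hterm : ∀ i : ℕ, i ≤ m →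
          v ((p : O) ^ i * x.coeff i ^ p ^ (m + 1 - i)) =
            (((i : ℝ) * wp + (p : ℝ) ^ (m + 1 - i) * (e + (p : ℝ) ^ i * va) : ℝ) : WithTop ℝ) := by
        intro i hi
        rw [hvmul, hvpj,
          hpow _ _ (ih i (Nat.lt_succ_of_le hi)) (p ^ (m + 1 - i)),
          ← WithTop.coe_add]
        congr 1
        push_cast
        ring
      set c : ℝ := (m : ℝ) * wp + (p : ℝ) * (e + (p : ℝ) ^ m * va) with hc
      have hm : v ((p : O) ^ m * x.coeff m ^ p ^ (m + 1 - m)) = (c : WithTop ℝ) := by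
        rw [hterm m le_rfl]
        congr 1
        rw [show m + 1 - m = 1 by omega]
        ring
      have hrest : (c : WithTop ℝ) < v (∑ i ∈ range m, (p : O) ^ i * x.coeff i ^ p ^ (m + 1 - i)) := by
        refine hsum_gt _ _ _ (fun i hi => ?_)
        have him : i < m := mem_range.mp hi
        rw [hterm i him.le]
        rw [WithTop.coe_lt_coe]
        -- real inequality
        set k : ℕ := m - i with hk
        have hk1 : 1 ≤ k := by omega
        have hmk : m = i + k := by omega
        have hmi : m + 1 - i = k + 1 := by omega
        have hb : (1 : ℝ) + (k : ℝ) * ((p : ℝ) - 1) ≤ (p : ℝ) ^ k := by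
          have := one_add_mul_le_pow (a := (p : ℝ) - 1) (by linarith) k
          rwa [show (1 : ℝ) + ((p : ℝ) - 1) = (p : ℝ) by ring] at this
        rw [hmi, hc]
        have e1 : (p : ℝ) ^ (k + 1) = (p : ℝ) ^ k * (p : ℝ) := pow_succ _ _
        have e2 : (p : ℝ) ^ m = (p : ℝ) ^ i * (p : ℝ) ^ k := by
          rw [hmk, pow_add]
        have hmr : (m : ℝ) = (i : ℝ) + (k : ℝ) := by
          rw [hmk]; push_cast; ring
        rw [e1, e2, hmr]
        have hk1R : (1 : ℝ) ≤ (k : ℝ) := by exact_mod_cast hk1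
        nlinarith [mul_le_mul_of_nonneg_right hb (le_of_lt he0), he0, hp1R, hk1R,
          mul_pos (mul_pos (sub_pos.mpr hp1R) he0) (lt_of_lt_of_le zero_lt_one hk1R)]
      have hvsum : v ((p : O) ^ (m + 1) * x.coeff (m + 1)) = (c : WithTop ℝ) := by
        rw [h1, hvneg, Finset.sum_range_succ, add_comm,
          hvadd_eq _ _ (by rw [hm]; exact hrest), hm]
      rw [hvmul, hvpj (m + 1)] at hvsum
      cases hvc : v (x.coeff (m + 1)) with
      | top => rw [hvc] at hvsum; simp at hvsum
      | coe r =>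
        rw [hvc, ← WithTop.coe_add] at hvsum
        have hreq : ((m : ℝ) + 1) * wp + r = c := by exact_mod_cast hvsum
        rw [WithTop.coe_eq_coe]
        have hps : (p : ℝ) ^ (m + 1) = (p : ℝ) ^ m * (p : ℝ) := pow_succ _ _
        rw [hps]
        rw [hc] at hreq
        nlinarith [hreq, hwpe]
end

section
/- Let ε ∈ R, let c > 0 be a real number and m ≥ 0 an integer such that p^m·v(ε − 1) > c. Then for every integer j ≥ 0, ([ε] − 1)^{p^{m+j}} belongs to [𝔞_R^{>c}] + p^{j+1}·W(R), where here [𝔞_R^{>c}] denotes the ideal of the full Witt ring W(R) generated by the Teichmüller representatives of elements of R of valuation > c. (This is the key congruence in the proof of Lemma 3.4 of the paper, applied there with v(ε − 1) = ep/(p−1).) -/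
/-!
Statement 11 (key congruence in the proof of Lemma 3.4 of Caruso–Liu):
if `ε ∈ R` satisfies `p^m·v(ε−1) > c` then for every `j ≥ 0`,
`([ε] − 1)^{p^{m+j}} ∈ [𝔞_R^{>c}] + p^{j+1}·W(R)` in the full Witt ring `W(R)`.
-/

/-- The ideal `[𝔞_R^{>c}]` of the full Witt ring `W(R)`: generated by the Teichmüller
representatives of elements of valuation `> c`. -/
noncomputable def wittIdealGT (p : ℕ) [hp : Fact p.Prime] {R : Type*} [CommRing R]
    (v : R → WithTop ℝ) (c : ℝ) : Ideal (WittVector p R) :=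
  Ideal.span {z | ∃ y : R, (c : WithTop ℝ) < v y ∧ z = WittVector.teichmuller p y}

/-- Any Witt vector with zero constant coefficient is `p` times something (perfect case). -/
lemma exists_p_mul_of_coeff_zero {p : ℕ} [hp : Fact p.Prime] {R : Type*} [CommRing R] [CharP R p]
    [PerfectRing R p] (x : WittVector p R) (h : x.coeff 0 = 0) :
    ∃ z : WittVector p R, x = p * z := by
  set y : WittVector p R := WittVector.mk p (fun n => x.coeff (n + 1)) with hy
  have hV : WittVector.verschiebung y = x := by
    ext n
    cases n with
    | zero => rw [WittVector.verschiebung_coeff_zero, h]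
    | succ n => rw [WittVector.verschiebung_coeff_succ]; rfl
  refine ⟨(WittVector.frobeniusEquiv p R).symm y, ?_⟩
  have hvf := WittVector.verschiebung_frobenius (p := p)
    ((WittVector.frobeniusEquiv p R).symm y)
  have hfe : WittVector.frobenius ((WittVector.frobeniusEquiv p R).symm y) = y :=
    (WittVector.frobeniusEquiv p R).apply_symm_apply y
  rw [hfe] at hvf
  rw [← hV, hvf, mul_comm]

theorem teichmuller_sub_one_pow_mem
    (p : ℕ) [hp : Fact p.Prime] {R : Type*} [CommRing R] [CharP R p] [PerfectRing R p]
    (v : R → WithTop ℝ)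
    (hv0 : v 0 = ⊤)
    (hvmul : ∀ x y : R, v (x * y) = v x + v y)
    (hvadd : ∀ x y : R, min (v x) (v y) ≤ v (x + y))
    (hvnonneg : ∀ x : R, 0 ≤ v x)
    (ε : R) (c : ℝ) (hc : 0 < c) (m : ℕ)
    (hm : (c : WithTop ℝ) < (((p : ℝ) ^ m : ℝ) : WithTop ℝ) * v (ε - 1)) :
    ∀ j : ℕ,
      (WittVector.teichmuller p ε - 1) ^ (p ^ (m + j)) ∈
        wittIdealGT p v c + Ideal.span {((p : WittVector p R)) ^ (j + 1)} := by
  intro j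
  set t : R := ε - 1 with ht
  -- correction term
  have h0 : (WittVector.teichmuller p ε - 1 - WittVector.teichmuller p t).coeff 0 = 0 := by
    rw [← WittVector.constantCoeff_apply, map_sub, map_sub, map_one,
      WittVector.constantCoeff_apply, WittVector.constantCoeff_apply,
      WittVector.teichmuller_coeff_zero, WittVector.teichmuller_coeff_zero, ht]
    ring
  obtain ⟨z, hz⟩ := exists_p_mul_of_coeff_zero _ h0
  have key : WittVector.teichmuller p ε - 1 = WittVector.teichmuller p t + p * z := by
    linear_combination hz
  set N : ℕ := p ^ (m + j) with hN
  rw [key, add_pow]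
  apply Ideal.sum_mem
  intro k hk
  simp only [Finset.mem_range] at hk
  by_cases hcase : j + 1 ≤ N - k
  · -- divisible by p^{j+1}
    rw [Ideal.add_eq_sup]
    apply Ideal.mem_sup_right
    rw [Ideal.mem_span_singleton]
    have hdvd : (p : WittVector p R) ^ (j + 1) ∣ (p * z : WittVector p R) ^ (N - k) := by
      rw [mul_pow]
      exact Dvd.dvd.mul_right (pow_dvd_pow _ hcase) _
    exact Dvd.dvd.mul_right (Dvd.dvd.mul_left hdvd _) _
  · -- high power of the Teichmüller part
    have hkN : k ≤ N := Nat.lt_succ_iff.mp hk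
    have hNj : p ^ m + j ≤ N := by
      have h1 : 1 ≤ p ^ m := Nat.one_le_pow _ _ hp.out.pos
      have h2 : j + 1 ≤ p ^ j := by
        have := Nat.lt_two_pow_self (n := j)
        have := Nat.pow_le_pow_left hp.out.two_le j
        omega
      calc p ^ m + j ≤ p ^ m + p ^ m * j := by nlinarith
        _ = p ^ m * (j + 1) := by ring
        _ ≤ p ^ m * p ^ j := Nat.mul_le_mul_left _ h2
        _ = N := by rw [hN, pow_add]
    have hkm : p ^ m ≤ k := by omega
    have hk1 : 1 ≤ k := le_trans (Nat.one_le_pow _ _ hp.out.pos) hkm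
    -- the Teichmüller part lies in the ideal
    have hvk : (c : WithTop ℝ) < v (t ^ k) := by
      cases hvt : v t with
      | top =>
        have : v (t ^ k) = ⊤ := by
          rw [show k = 1 + (k - 1) by omega, pow_add, pow_one, hvmul, hvt, top_add]
        rw [this]; exact WithTop.coe_lt_top c
      | coe d =>
        have hd0 : (0 : ℝ) ≤ d := by
          have := hvnonneg t; rw [hvt] at this; exact_mod_cast this
        have hcd : c < (p : ℝ) ^ m * d := by
          rw [hvt, ← WithTop.coe_mul] at hm; exact_mod_cast hm
        have hpow : ∀ n : ℕ, v (t ^ (n + 1)) = (((n + 1 : ℕ) : ℝ) * d : ℝ) := by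
          intro n
          induction n with
          | zero => simp [hvt]
          | succ n ih =>
            rw [pow_succ, hvmul, ih, hvt, ← WithTop.coe_add]
            congr 1
            push_cast
            ring
        have hkd : v (t ^ k) = ((k : ℝ) * d : ℝ) := by
          have := hpow (k - 1)
          rwa [show k - 1 + 1 = k by omega] at this
        rw [hkd]
        have hpk : (p : ℝ) ^ m ≤ (k : ℝ) := by exact_mod_cast hkm
        have : c < (k : ℝ) * d := lt_of_lt_of_le hcd (by nlinarith)
        exact_mod_cast this
    have hmem : WittVector.teichmuller p t ^ k ∈ wittIdealGT p v c := by
      rw [← map_pow]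
      exact Ideal.subset_span ⟨t ^ k, hvk, rfl⟩
    rw [Ideal.add_eq_sup]
    exact Ideal.mul_mem_right _ _ (Ideal.mul_mem_right _ _ (Ideal.mem_sup_left hmem))
end

section
/- Let G be a group and let 𝒞 be a class of lattice representations of G which is stable under subobjects and under direct sums (and closed under isomorphism). Assume that every finitely generated ℤ_p[G]-module killed by p admits a surjective G-equivariant ℤ_p-linear map from some member of 𝒞. Then for every n ≥ 1, every finitely generated ℤ_p[G]-module T killed by p^n admits a surjective G-equivariant ℤ_p-linear map from some member of 𝒞; consequently T is isomorphic, as a ℤ_p[G]-module, to L/L′ for some L ∈ 𝒞 and some G-stable submodule L′ ⊆ L with L′ ∈ 𝒞. -/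
/-!
Statement 12 (Proposition 5.2 of Caruso–Liu): if a class `𝒞` of lattice
representations of `G` over `ℤ_p` is stable under subobjects and direct sums, and
every finitely generated `ℤ_p[G]`-module killed by `p` admits a lift from `𝒞`, then
every finitely generated `ℤ_p[G]`-module killed by `p^n` admits a lift from `𝒞`,
and is hence isomorphic to a quotient `L/L'` with `L, L' ∈ 𝒞`.
-/

universe u

/-- A lattice representation of `G`: a finitely generated free `ℤ_p`-module with a
`ℤ_p`-linear action of `G`. -/
structure LatRep (p : ℕ) [Fact p.Prime] (G : Type u) [Group G] : Type (u + 1) where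
  M : Type u
  [acg : AddCommGroup M]
  [mod : Module ℤ_[p] M]
  [act : DistribMulAction G M]
  [smulComm : SMulCommClass G ℤ_[p] M]
  [free : Module.Free ℤ_[p] M]
  [fin : Module.Finite ℤ_[p] M]

attribute [instance] LatRep.acg LatRep.mod LatRep.act LatRep.smulComm LatRep.free LatRep.fin

section Aux

variable {p : ℕ} [Fact p.Prime] {G : Type u} [Group G]

/-- The `G`-action on a `G`-stable submodule. -/
def subAct {M : Type u} [AddCommGroup M] [Module ℤ_[p] M] [DistribMulAction G M]
    (W : Submodule ℤ_[p] M) (h : ∀ (g : G) (x : M), x ∈ W → g • x ∈ W) :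
    DistribMulAction G W where
  smul g w := ⟨g • (w : M), h g w w.2⟩
  one_smul w := Subtype.ext (one_smul G (w : M))
  mul_smul a b w := Subtype.ext (mul_smul a b (w : M))
  smul_zero g := Subtype.ext (smul_zero g)
  smul_add g a b := Subtype.ext (smul_add g (a : M) (b : M))

/-- The commuting-actions property on a `G`-stable submodule. -/
def subComm {M : Type u} [AddCommGroup M] [Module ℤ_[p] M] [DistribMulAction G M]
    [SMulCommClass G ℤ_[p] M]
    (W : Submodule ℤ_[p] M) (h : ∀ (g : G) (x : M), x ∈ W → g • x ∈ W) :
    letI := subAct W h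
    SMulCommClass G ℤ_[p] W :=
  letI := subAct W h
  ⟨fun g c w => Subtype.ext (smul_comm g c (w : M))⟩

variable {Z : Type u} [AddCommGroup Z] [Module ℤ_[p] Z] [DistribMulAction G Z]
    [SMulCommClass G ℤ_[p] Z]

/-- The `G`-action on the quotient by a `G`-stable submodule. -/
noncomputable def quotAct (N : Submodule ℤ_[p] Z) (h : ∀ (g : G) (x : Z), x ∈ N → g • x ∈ N) :
    DistribMulAction G (Z ⧸ N) where
  smul g x := Submodule.mapQ N N (DistribMulAction.toLinearMap ℤ_[p] Z g)
    (show N ≤ N.comap _ from fun z hz => h g z hz) x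
  one_smul x := by
    obtain ⟨z, rfl⟩ := Submodule.Quotient.mk_surjective N x
    show Submodule.mapQ N N _ _ (Submodule.Quotient.mk z) = Submodule.Quotient.mk z
    rw [Submodule.mapQ_apply]
    exact congrArg Submodule.Quotient.mk (one_smul G z)
  mul_smul a b x := by
    obtain ⟨z, rfl⟩ := Submodule.Quotient.mk_surjective N x
    show Submodule.mapQ N N _ _ (Submodule.Quotient.mk z)
      = Submodule.mapQ N N _ _ (Submodule.mapQ N N _ _ (Submodule.Quotient.mk z))
    rw [Submodule.mapQ_apply, Submodule.mapQ_apply, Submodule.mapQ_apply]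
    exact congrArg Submodule.Quotient.mk (mul_smul a b z)
  smul_zero g := LinearMap.map_zero _
  smul_add g a b := LinearMap.map_add _ a b

theorem quotAct_mk (N : Submodule ℤ_[p] Z) (h : ∀ (g : G) (x : Z), x ∈ N → g • x ∈ N)
    (g : G) (z : Z) :
    letI := quotAct N h
    g • (Submodule.Quotient.mk z : Z ⧸ N) = Submodule.Quotient.mk (g • z) := by
  show Submodule.mapQ N N _ _ (Submodule.Quotient.mk z) = _
  rw [Submodule.mapQ_apply]
  rfl

/-- The commuting-actions property on the quotient by a `G`-stable submodule. -/
def quotComm (N : Submodule ℤ_[p] Z) (h : ∀ (g : G) (x : Z), x ∈ N → g • x ∈ N) :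
    letI := quotAct N h
    SMulCommClass G ℤ_[p] (Z ⧸ N) := by
  letI := quotAct N h
  constructor
  intro g c x
  obtain ⟨z, rfl⟩ := Submodule.Quotient.mk_surjective N x
  rw [← Submodule.Quotient.mk_smul, quotAct_mk, quotAct_mk, ← Submodule.Quotient.mk_smul,
    smul_comm]

/-- The direct sum of two lattice representations. -/
noncomputable def prodRep (p : ℕ) [Fact p.Prime] (G : Type u) [Group G] (L₀ L₁ : LatRep p G) :
    LatRep p G :=
  { M := L₀.M × L₁.M }

/-- Key inductive lemma: if `Z` admits an equivariant map `j` to a member of `𝒞`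
whose kernel is killed by `p ^ n`, then `Z` admits a surjective lift from `𝒞`. -/
theorem key_lemma (p : ℕ) [Fact p.Prime] (G : Type u) [Group G]
    (C : Set (LatRep p G))
    (hsub : ∀ L ∈ C, ∀ L' : LatRep p G, ∀ f : L'.M →ₗ[ℤ_[p]] L.M,
      (∀ (g : G) (x : L'.M), f (g • x) = g • f x) → Function.Injective f → L' ∈ C)
    (hsum : ∀ L₁ ∈ C, ∀ L₂ ∈ C, ∀ L' : LatRep p G,
      ∀ f : L'.M →ₗ[ℤ_[p]] (L₁.M × L₂.M),
      (∀ (g : G) (x : L'.M), f (g • x) = g • f x) → Function.Bijective f → L' ∈ C)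
    (hlift : ∀ (T : Type u) [AddCommGroup T] [Module ℤ_[p] T] [DistribMulAction G T]
      [SMulCommClass G ℤ_[p] T] [Module.Finite ℤ_[p] T],
      (∀ x : T, (p : ℤ_[p]) • x = 0) →
      ∃ L ∈ C, ∃ f : L.M →ₗ[ℤ_[p]] T,
        (∀ (g : G) (x : L.M), f (g • x) = g • f x) ∧ Function.Surjective f)
    (n : ℕ) :
    ∀ (Z : Type u) [AddCommGroup Z] [Module ℤ_[p] Z] [DistribMulAction G Z]
      [SMulCommClass G ℤ_[p] Z] [Module.Finite ℤ_[p] Z] (L₁ : LatRep p G), L₁ ∈ C →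
      ∀ j : Z →ₗ[ℤ_[p]] L₁.M, (∀ (g : G) (z : Z), j (g • z) = g • j z) →
      (∀ z : Z, j z = 0 → ((p : ℤ_[p]) ^ n) • z = 0) →
      ∃ L ∈ C, ∃ f : L.M →ₗ[ℤ_[p]] Z,
        (∀ (g : G) (x : L.M), f (g • x) = g • f x) ∧ Function.Surjective f := by
  induction n with
  | zero =>
    intro Z _ _ _ _ _ L₁ hL₁ j hjG hj0
    have hinj : Function.Injective j := by
      intro a b hab
      have h1 : j (a - b) = 0 := by rw [map_sub, hab, sub_self]
      have h2 := hj0 _ h1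
      rwa [pow_zero, one_smul, sub_eq_zero] at h2
    haveI : NoZeroSMulDivisors ℤ_[p] Z := by
      constructor
      intro c z hcz
      have h1 : c • j z = 0 := by rw [← map_smul, hcz, map_zero]
      rcases smul_eq_zero.mp h1 with hc | hz
      · exact Or.inl hc
      · exact Or.inr (hinj (by rw [hz, map_zero]))
    haveI : Module.Free ℤ_[p] Z := inferInstance
    exact ⟨⟨Z⟩, hsub L₁ hL₁ ⟨Z⟩ j hjG hinj, LinearMap.id, fun g x => rfl,
      Function.surjective_id⟩
  | succ n ih =>
    intro Z _ _ _ _ _ L₁ hL₁ j hjG hj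
    have hp0 : (p : ℤ_[p]) ≠ 0 := by
      exact_mod_cast (Fact.out : p.Prime).ne_zero
    -- `N = pZ`
    set N : Submodule ℤ_[p] Z :=
      LinearMap.range ((p : ℤ_[p]) • (LinearMap.id : Z →ₗ[ℤ_[p]] Z)) with hNdef
    have hNmem : ∀ x : Z, x ∈ N ↔ ∃ y : Z, (p : ℤ_[p]) • y = x := by
      intro x
      constructor
      · rintro ⟨y, rfl⟩; exact ⟨y, rfl⟩
      · rintro ⟨y, rfl⟩; exact ⟨y, rfl⟩
    have hNst : ∀ (g : G) (x : Z), x ∈ N → g • x ∈ N := by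
      intro g x hx
      obtain ⟨y, rfl⟩ := (hNmem x).mp hx
      exact (hNmem _).mpr ⟨g • y, (smul_comm g ((p : ℤ_[p])) y).symm⟩
    letI qA := quotAct N hNst
    haveI qC := quotComm N hNst
    have hkill : ∀ x : Z ⧸ N, (p : ℤ_[p]) • x = 0 := by
      intro x
      obtain ⟨z, rfl⟩ := Submodule.Quotient.mk_surjective N x
      rw [← Submodule.Quotient.mk_smul, Submodule.Quotient.mk_eq_zero]
      exact (hNmem _).mpr ⟨z, rfl⟩
    obtain ⟨L₀, hL₀, u, huG, husurj⟩ := hlift (Z ⧸ N) hkill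
    -- the fibre product `W ⊆ L₀.M × Z`
    set φ : (L₀.M × Z) →ₗ[ℤ_[p]] Z ⧸ N :=
      u.comp (LinearMap.fst ℤ_[p] L₀.M Z) - (N.mkQ).comp (LinearMap.snd ℤ_[p] L₀.M Z)
      with hφdef
    set W : Submodule ℤ_[p] (L₀.M × Z) := LinearMap.ker φ with hWdef
    have hWmem : ∀ w : L₀.M × Z, w ∈ W ↔ u w.1 = Submodule.Quotient.mk w.2 := by
      intro w
      rw [hWdef, LinearMap.mem_ker, hφdef, LinearMap.sub_apply, sub_eq_zero]
      rfl
    have hWst : ∀ (g : G) (w : L₀.M × Z), w ∈ W → g • w ∈ W := by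
      intro g w hw
      rw [hWmem] at hw ⊢
      show u (g • w.1) = Submodule.Quotient.mk (g • w.2)
      rw [huG, hw, quotAct_mk]
    letI wA := subAct W hWst
    haveI wC := subComm W hWst
    haveI : Module.Finite ℤ_[p] W :=
      Module.Finite.iff_fg.mpr (IsNoetherian.noetherian W)
    -- the direct sum `L₀ ⊕ L₁` lies in `𝒞`
    set Lprod : LatRep p G := prodRep p G L₀ L₁ with hLprod
    have hLprodC : Lprod ∈ C :=
      hsum L₀ hL₀ L₁ hL₁ Lprod LinearMap.id (fun g x => rfl) Function.bijective_id
    -- the map `W → L₀ ⊕ L₁`, `(x, z) ↦ (x, j z)`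
    set j' : W →ₗ[ℤ_[p]] Lprod.M :=
      (LinearMap.prodMap LinearMap.id j).comp W.subtype with hj'def
    have hj'G : ∀ (g : G) (w : W), j' (g • w) = g • j' w := by
      rintro g ⟨⟨x, z⟩, hw⟩
      exact Prod.ext rfl (hjG g z)
    have hj'ker : ∀ w : W, j' w = 0 → ((p : ℤ_[p]) ^ n) • w = 0 := by
      rintro ⟨⟨x, z⟩, hw⟩ h0
      have hx : x = 0 := congrArg Prod.fst h0
      have hjz : j z = 0 := congrArg Prod.snd h0
      have hzN : z ∈ N := by
        rw [hWmem] at hw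
        rw [← Submodule.Quotient.mk_eq_zero (p := N), ← hw, hx, map_zero]
      obtain ⟨z', hz'⟩ := (hNmem z).mp hzN
      have hjz' : j z' = 0 := by
        have h1 : (p : ℤ_[p]) • j z' = 0 := by rw [← map_smul, hz', hjz]
        exact (smul_eq_zero.mp h1).resolve_left hp0
      have h2 : ((p : ℤ_[p]) ^ (n + 1)) • z' = 0 := hj z' hjz'
      apply Subtype.ext
      show ((p : ℤ_[p]) ^ n) • ((x, z) : L₀.M × Z) = 0
      rw [hx]
      refine Prod.ext (by simp) ?_
      show ((p : ℤ_[p]) ^ n) • z = 0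
      rw [← hz', smul_smul, ← pow_succ]
      exact h2
    obtain ⟨L, hL, f, hfG, hfsurj⟩ := ih W Lprod hLprodC j' hj'G hj'ker
    -- compose with the projection `W → Z`
    refine ⟨L, hL, (LinearMap.snd ℤ_[p] L₀.M Z).comp (W.subtype.comp f), ?_, ?_⟩
    · intro g a
      show ((f (g • a) : L₀.M × Z)).2 = g • ((f a : L₀.M × Z)).2
      rw [hfG g a]
      rfl
    · intro z
      obtain ⟨x, hux⟩ := husurj (Submodule.Quotient.mk z)
      have hw : (x, z) ∈ W := (hWmem (x, z)).mpr hux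
      obtain ⟨a, ha⟩ := hfsurj ⟨(x, z), hw⟩
      exact ⟨a, by rw [LinearMap.comp_apply, LinearMap.comp_apply, ha]; rfl⟩

end Aux

theorem lift_of_torsion_of_lift_of_p_torsion
    (p : ℕ) [Fact p.Prime] (G : Type u) [Group G]
    (C : Set (LatRep p G))
    -- `𝒞` is stable under subobjects (and closed under isomorphism): any lattice
    -- representation admitting an injective equivariant map into a member of `𝒞`
    -- belongs to `𝒞`.
    (hsub : ∀ L ∈ C, ∀ L' : LatRep p G, ∀ f : L'.M →ₗ[ℤ_[p]] L.M,
      (∀ (g : G) (x : L'.M), f (g • x) = g • f x) → Function.Injective f → L' ∈ C)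
    -- `𝒞` is stable under direct sums: any lattice representation equivariantly
    -- isomorphic to the direct sum of two members of `𝒞` belongs to `𝒞`.
    (hsum : ∀ L₁ ∈ C, ∀ L₂ ∈ C, ∀ L' : LatRep p G,
      ∀ f : L'.M →ₗ[ℤ_[p]] (L₁.M × L₂.M),
      (∀ (g : G) (x : L'.M), f (g • x) = g • f x) → Function.Bijective f → L' ∈ C)
    -- every finitely generated `ℤ_p[G]`-module killed by `p` admits a lift from `𝒞`
    (hlift : ∀ (T : Type u) [AddCommGroup T] [Module ℤ_[p] T] [DistribMulAction G T]
      [SMulCommClass G ℤ_[p] T] [Module.Finite ℤ_[p] T],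
      (∀ x : T, (p : ℤ_[p]) • x = 0) →
      ∃ L ∈ C, ∃ f : L.M →ₗ[ℤ_[p]] T,
        (∀ (g : G) (x : L.M), f (g • x) = g • f x) ∧ Function.Surjective f)
    (n : ℕ) (hn : 1 ≤ n)
    (T : Type u) [AddCommGroup T] [Module ℤ_[p] T] [DistribMulAction G T]
    [SMulCommClass G ℤ_[p] T] [Module.Finite ℤ_[p] T]
    (hT : ∀ x : T, ((p : ℤ_[p]) ^ n) • x = 0) :
    (∃ L ∈ C, ∃ f : L.M →ₗ[ℤ_[p]] T,
      (∀ (g : G) (x : L.M), f (g • x) = g • f x) ∧ Function.Surjective f) ∧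
    (∃ L ∈ C, ∃ L' ∈ C, ∃ ι : L'.M →ₗ[ℤ_[p]] L.M, ∃ f : L.M →ₗ[ℤ_[p]] T,
      (∀ (g : G) (x : L'.M), ι (g • x) = g • ι x) ∧ Function.Injective ι ∧
      (∀ (g : G) (x : L.M), f (g • x) = g • f x) ∧ Function.Surjective f ∧
      LinearMap.ker f = LinearMap.range ι) := by
  -- first, obtain some member of `𝒞` by lifting the zero module
  letI : DistribMulAction G PUnit.{u + 1} :=
    { smul := fun _ x => x
      one_smul := fun _ => rfl
      mul_smul := fun _ _ _ => rfl
      smul_zero := fun _ => rfl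
      smul_add := fun _ _ _ => rfl }
  haveI : SMulCommClass G ℤ_[p] PUnit.{u + 1} :=
    ⟨fun _ _ _ => Subsingleton.elim _ _⟩
  obtain ⟨Lany, hLany, -⟩ :=
    hlift PUnit.{u + 1} (fun x => Subsingleton.elim _ _)
  -- part 1: the surjective lift, from the key lemma applied to the zero map
  have part1 : ∃ L ∈ C, ∃ f : L.M →ₗ[ℤ_[p]] T,
      (∀ (g : G) (x : L.M), f (g • x) = g • f x) ∧ Function.Surjective f := by
    refine key_lemma p G C hsub hsum hlift n T Lany hLany 0 ?_ ?_
    · intro g z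
      simp
    · intro z _
      exact hT z
  obtain ⟨L, hL, f, hfG, hfsurj⟩ := part1
  refine ⟨⟨L, hL, f, hfG, hfsurj⟩, ?_⟩
  -- part 2: the kernel of `f` is a `G`-stable sublattice, hence a member of `𝒞`
  set K : Submodule ℤ_[p] L.M := LinearMap.ker f with hKdef
  have hKst : ∀ (g : G) (x : L.M), x ∈ K → g • x ∈ K := by
    intro g x hx
    rw [hKdef, LinearMap.mem_ker] at hx ⊢
    rw [hfG, hx, smul_zero]
  letI kA := subAct K hKst
  haveI kC := subComm K hKst
  haveI : Module.Finite ℤ_[p] K :=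
    Module.Finite.iff_fg.mpr (IsNoetherian.noetherian K)
  haveI : Module.Free ℤ_[p] K := inferInstance
  refine ⟨L, hL, ⟨K⟩, hsub L hL ⟨K⟩ K.subtype (fun g x => rfl) K.injective_subtype,
    K.subtype, f, fun g x => rfl, K.injective_subtype, hfG, hfsurj, ?_⟩
  rw [Submodule.range_subtype]
end
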